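/- arXiv:0801.3373 — 7 statements merged into one kernel-verified Lean document; each statement's English description precedes it below -/
import Mathlib

section
/- Let R = K[x_1,...,x_n] be a polynomial ring over a field K with maximal graded ideal M = (x_1,...,x_n), let ℓ be a nonzero linear form, I a homogeneous ideal, S = R[M/ℓ] the quadratic extension, and J = IS ∩ R. Then J equals the union over k ∈ ℕ of the ideals (I·M^k : ℓ^k). -/
open MvPolynomial

set_option synthInstance.maxHeartbeats 1000000
set_option maxHeartbeats 1000000

noncomputable section

/-- The polynomial ring `R = K[x_1,…,x_n]`. -/
abbrev Rn (K : Type) [Field K] (n : ℕ) : Type := MvPolynomial (Fin n) K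

/-- The irrelevant maximal ideal `M = (x_1,…,x_n)`. -/
def Mi (K : Type) [Field K] (n : ℕ) : Ideal (Rn K n) :=
  Ideal.span (Set.range (X : Fin n → Rn K n))

variable {K : Type} [Field K] {n : ℕ}

/-- `I` is a homogeneous ideal. -/
def IsHomog (I : Ideal (Rn K n)) : Prop :=
  ∀ f ∈ I, ∀ j : ℕ, homogeneousComponent j f ∈ I

/-- `I_⟨j⟩`, the ideal generated by the degree-`j` forms in `I`. -/
def comp (I : Ideal (Rn K n)) (j : ℕ) : Ideal (Rn K n) :=
  Ideal.span {f | f ∈ I ∧ f.IsHomogeneous j}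

/-- The saturation `I^sat = I : M^∞`. -/
def sat (I : Ideal (Rn K n)) : Ideal (Rn K n) :=
  ⨆ k : ℕ, I.colon ((Mi K n ^ k : Ideal (Rn K n)) : Set (Rn K n))

/-- `I : g^∞`. -/
def colonInfty (I : Ideal (Rn K n)) (g : Rn K n) : Ideal (Rn K n) :=
  ⨆ k : ℕ, I.colon (Ideal.span {g ^ k})

/-- The initial degree (order) `o(I)` of a homogeneous ideal. -/
def order (I : Ideal (Rn K n)) : ℕ :=
  sInf {j | ∃ f ∈ I, f ≠ 0 ∧ f.IsHomogeneous j}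

/-- The quadratic extension `S = R[M/ℓ] = ∪_k M^k/ℓ^k ⊆ R_ℓ`. -/
def quadExt (ℓ : Rn K n) : Subalgebra (Rn K n) (Localization.Away ℓ) :=
  Algebra.adjoin (Rn K n)
    {x | ∃ m ∈ Mi K n,
      x * algebraMap (Rn K n) (Localization.Away ℓ) ℓ =
        algebraMap (Rn K n) (Localization.Away ℓ) m}

/-- The contraction `IS ∩ R` of `I` from `S = R[M/ℓ]`. -/
def contraction (I : Ideal (Rn K n)) (ℓ : Rn K n) : Ideal (Rn K n) :=
  Ideal.comap (algebraMap (Rn K n) (quadExt ℓ))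
    (Ideal.map (algebraMap (Rn K n) (quadExt ℓ)) I)

/-- `I` is contracted (from a quadratic extension). -/
def IsContracted (I : Ideal (Rn K n)) : Prop :=
  ∃ ℓ : Rn K n, ℓ ≠ 0 ∧ ℓ.IsHomogeneous 1 ∧ I = contraction I ℓ

/-- `I` is `M`-full. -/
def IsMFull (I : Ideal (Rn K n)) : Prop :=
  ∃ ℓ : Rn K n, ℓ ≠ 0 ∧ ℓ.IsHomogeneous 1 ∧ (I * Mi K n).colon (Ideal.span {ℓ}) = I

/-- The minimal number of generators `μ(I)`. -/
def mu (I : Ideal (Rn K n)) : ℕ :=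
  sInf {k | ∃ s : Finset (Rn K n), s.card = k ∧ Ideal.span (s : Set (Rn K n)) = I}

/-- The integral closure of an ideal, as a set: elements satisfying an equation
`a^t + r_1 a^{t-1} + … + r_t = 0` with `r_i ∈ I^i`. -/
def intClo {A : Type} [CommRing A] (I : Ideal A) : Set A :=
  {a | ∃ (t : ℕ) (r : ℕ → A), 0 < t ∧ (∀ i, 1 ≤ i → i ≤ t → r i ∈ I ^ i) ∧
    a ^ t + ∑ i ∈ Finset.Icc 1 t, r i * a ^ (t - i) = 0}

/-- `I` is integrally closed. -/
def IsIC {A : Type} [CommRing A] (I : Ideal A) : Prop :=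
  ∀ a ∈ intClo I, a ∈ I

/-- The class `C`: finite-colength homogeneous ideals with `I + (ℓ) = M^{o(I)} + (ℓ)`
for some nonzero linear form `ℓ`, which are contracted. -/
def InC (I : Ideal (Rn K n)) : Prop :=
  IsHomog I ∧ (∃ m : ℕ, Mi K n ^ m ≤ I) ∧ IsContracted I ∧
    ∃ ℓ : Rn K n, ℓ ≠ 0 ∧ ℓ.IsHomogeneous 1 ∧
      I + Ideal.span {ℓ} = Mi K n ^ order I + Ideal.span {ℓ}

/-- `(b, dg, φ, π)` is a graded free resolution of the homogeneous ideal `J`: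
the `i`-th free module has basis `Fin (b i)` with generators in degrees `dg i`,
the maps are given by matrices with homogeneous entries of the appropriate degrees,
and the complex is exact. -/
def IsGradedRes (J : Ideal (Rn K n)) (b : ℕ → ℕ) (dg : (i : ℕ) → Fin (b i) → ℕ)
    (φ : (i : ℕ) → Matrix (Fin (b i)) (Fin (b (i + 1))) (Rn K n))
    (π : Fin (b 0) → Rn K n) : Prop :=
  (∀ c, π c ∈ J) ∧ (∀ c, (π c).IsHomogeneous (dg 0 c)) ∧
    J = Ideal.span (Set.range π) ∧
    (∀ i r c, (φ i) r c = 0 ∨ ∃ e, ((φ i) r c).IsHomogeneous e ∧ dg i r + e = dg (i + 1) c) ∧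
    LinearMap.ker (Matrix.mulVecLin (Matrix.of fun (_ : Fin 1) c => π c)) =
      LinearMap.range (Matrix.mulVecLin (φ 0)) ∧
    ∀ i, LinearMap.ker (Matrix.mulVecLin (φ i)) = LinearMap.range (Matrix.mulVecLin (φ (i + 1)))

/-- `reg J ≤ m`: `J` admits a graded free resolution with `i`-th shifts at most `m + i`. -/
def RegLE (J : Ideal (Rn K n)) (m : ℕ) : Prop :=
  ∃ b dg φ π, IsGradedRes J b dg φ π ∧ ∀ i c, dg i c ≤ m + i

/-- The Castelnuovo–Mumford regularity of a homogeneous ideal. -/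
def regId (J : Ideal (Rn K n)) : ℕ := sInf {m | RegLE J m}

/-- `J` has a linear resolution (generated in degree `d` with `i`-th syzygies in degree `d+i`). -/
def HasLinRes (J : Ideal (Rn K n)) (d : ℕ) : Prop :=
  ∃ b dg φ π, IsGradedRes J b dg φ π ∧ ∀ i c, dg i c = d + i

/-- `I` is componentwise linear. -/
def CompLinear (I : Ideal (Rn K n)) : Prop :=
  ∀ d : ℕ, HasLinRes (comp I d) d

lemma hom1_mem_Mi {ℓ : Rn K n} (hℓ : ℓ.IsHomogeneous 1) : ℓ ∈ Mi K n := by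
  rw [Mi, ← Set.image_univ, mem_ideal_span_X_image]
  intro m hm
  by_contra hc
  push_neg at hc
  have hm0 : m = 0 := Finsupp.ext fun i => hc i (Set.mem_univ i)
  have := hℓ.coeff_eq_zero (d := m) (by simp [hm0, Finsupp.degree])
  exact MvPolynomial.mem_support_iff.mp hm this

lemma auxA {ℓ : Rn K n} (hℓM : ℓ ∈ Mi K n) {t : Localization.Away ℓ}
    (ht : t ∈ quadExt ℓ) :
    ∃ (j : ℕ) (m : Rn K n), m ∈ Mi K n ^ j ∧
      t * algebraMap (Rn K n) (Localization.Away ℓ) (ℓ ^ j) =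
        algebraMap (Rn K n) (Localization.Away ℓ) m := by
  set f := algebraMap (Rn K n) (Localization.Away ℓ) with hf
  rw [quadExt] at ht
  induction ht using Algebra.adjoin_induction with
  | mem x hx =>
      obtain ⟨m, hm, hx⟩ := hx
      exact ⟨1, m, by simpa [pow_one] using hm, by simpa [pow_one] using hx⟩
  | algebraMap r => exact ⟨0, r, by simp, by simp [hf]⟩
  | add x y hx hy ihx ihy =>
      obtain ⟨j1, m1, hm1, h1⟩ := ihx
      obtain ⟨j2, m2, hm2, h2⟩ := ihy
      refine ⟨j1 + j2, m1 * ℓ ^ j2 + m2 * ℓ ^ j1, ?_, ?_⟩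
      · have e : Mi K n ^ (j1 + j2) = Mi K n ^ j1 * Mi K n ^ j2 := pow_add _ _ _
        refine add_mem ?_ ?_
        · rw [e]; exact Ideal.mul_mem_mul hm1 (Ideal.pow_mem_pow hℓM j2)
        · rw [e, mul_comm]; exact Ideal.mul_mem_mul hm2 (Ideal.pow_mem_pow hℓM j1)
      · calc (x + y) * f (ℓ ^ (j1 + j2))
            = (x * f (ℓ ^ j1)) * f (ℓ ^ j2) + (y * f (ℓ ^ j2)) * f (ℓ ^ j1) := by
              rw [pow_add, map_mul]; ring
          _ = f m1 * f (ℓ ^ j2) + f m2 * f (ℓ ^ j1) := by rw [h1, h2]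
          _ = f (m1 * ℓ ^ j2 + m2 * ℓ ^ j1) := by rw [map_add, map_mul, map_mul]
  | mul x y hx hy ihx ihy =>
      obtain ⟨j1, m1, hm1, h1⟩ := ihx
      obtain ⟨j2, m2, hm2, h2⟩ := ihy
      refine ⟨j1 + j2, m1 * m2, ?_, ?_⟩
      · rw [pow_add]; exact Ideal.mul_mem_mul hm1 hm2
      · calc (x * y) * f (ℓ ^ (j1 + j2))
            = (x * f (ℓ ^ j1)) * (y * f (ℓ ^ j2)) := by rw [pow_add, map_mul]; ring
          _ = f m1 * f m2 := by rw [h1, h2]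
          _ = f (m1 * m2) := (map_mul f m1 m2).symm

lemma auxB {ℓ : Rn K n} (hℓM : ℓ ∈ Mi K n) (k : ℕ) :
    ∀ m ∈ Mi K n ^ k, ∃ s ∈ quadExt ℓ,
      s * algebraMap (Rn K n) (Localization.Away ℓ) (ℓ ^ k) =
        algebraMap (Rn K n) (Localization.Away ℓ) m := by
  set f := algebraMap (Rn K n) (Localization.Away ℓ) with hf
  induction k with
  | zero =>
      intro m hm
      exact ⟨f m, (quadExt ℓ).algebraMap_mem m, by simp⟩
  | succ k ih =>
      intro m hm
      rw [pow_succ] at hm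
      refine Submodule.mul_induction_on hm ?_ ?_
      · intro a ha b hb
        obtain ⟨s, hsS, hs⟩ := ih a ha
        have hb' : (f b * IsLocalization.Away.invSelf ℓ) * f ℓ = f b := by
          rw [mul_assoc, mul_comm (IsLocalization.Away.invSelf ℓ),
            IsLocalization.Away.mul_invSelf, mul_one]
        refine ⟨s * (f b * IsLocalization.Away.invSelf ℓ),
          mul_mem hsS (Algebra.subset_adjoin ⟨b, hb, hb'⟩), ?_⟩
        calc s * (f b * IsLocalization.Away.invSelf ℓ) * f (ℓ ^ (k + 1))
            = (s * f (ℓ ^ k)) * ((f b * IsLocalization.Away.invSelf ℓ) * f ℓ) := by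
              rw [pow_succ, map_mul]; ring
          _ = f a * f b := by rw [hs, hb']
          _ = f (a * b) := (map_mul f a b).symm
      · rintro y1 y2 ⟨s1, hs1, h1⟩ ⟨s2, hs2, h2⟩
        exact ⟨s1 + s2, add_mem hs1 hs2, by rw [add_mul, h1, h2, map_add]⟩

/-- `J = IS ∩ R` equals the union over `k ∈ ℕ` of the ideals `(I·M^k : ℓ^k)`. -/
theorem stmt0 (K : Type) [Field K] (n : ℕ) (ℓ : Rn K n) (hℓ0 : ℓ ≠ 0)
    (hℓ : ℓ.IsHomogeneous 1) (I : Ideal (Rn K n)) (hI : IsHomog I) :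
    ∀ x : Rn K n, x ∈ contraction I ℓ ↔
      ∃ k : ℕ, x ∈ (I * Mi K n ^ k).colon (Ideal.span {ℓ ^ k}) := by
  set f := algebraMap (Rn K n) (Localization.Away ℓ) with hf
  have hℓM : ℓ ∈ Mi K n := hom1_mem_Mi hℓ
  have hinj : Function.Injective f :=
    IsLocalization.injective (Localization.Away ℓ)
      (powers_le_nonZeroDivisors_of_noZeroDivisors hℓ0)
  intro x
  constructor
  · intro hx
    rw [contraction, Ideal.mem_comap] at hx
    have key : ∀ s : quadExt ℓ, s ∈ Ideal.map (algebraMap (Rn K n) (quadExt ℓ)) I →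
        ∃ (k : ℕ) (y : Rn K n), y ∈ I * Mi K n ^ k ∧
          (s : Localization.Away ℓ) * f (ℓ ^ k) = f y := by
      intro s hs
      refine Submodule.span_induction ?_ ?_ ?_ ?_ hs
      · rintro t ⟨a, ha, rfl⟩
        exact ⟨0, a, by simpa [Ideal.mul_top] using ha, by simp [hf]⟩
      · exact ⟨0, 0, by simp, by simp⟩
      · rintro t1 t2 ht1 ht2 ⟨k1, y1, hy1, h1⟩ ⟨k2, y2, hy2, h2⟩
        refine ⟨k1 + k2, y1 * ℓ ^ k2 + y2 * ℓ ^ k1, ?_, ?_⟩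
        · have e : I * Mi K n ^ (k1 + k2) = (I * Mi K n ^ k1) * Mi K n ^ k2 := by
            rw [pow_add, mul_assoc]
          refine add_mem ?_ ?_
          · rw [e]; exact Ideal.mul_mem_mul hy1 (Ideal.pow_mem_pow hℓM k2)
          · have e2 : I * Mi K n ^ (k1 + k2) = (I * Mi K n ^ k2) * Mi K n ^ k1 := by
              rw [pow_add, mul_comm (Mi K n ^ k1), ← mul_assoc]
            rw [e2]
            exact Ideal.mul_mem_mul hy2 (Ideal.pow_mem_pow hℓM k1)
        · rw [Subalgebra.coe_add]
          calc ((t1 : Localization.Away ℓ) + t2) * f (ℓ ^ (k1 + k2))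
              = ((t1 : Localization.Away ℓ) * f (ℓ ^ k1)) * f (ℓ ^ k2)
                + ((t2 : Localization.Away ℓ) * f (ℓ ^ k2)) * f (ℓ ^ k1) := by
                rw [pow_add, map_mul]; ring
            _ = f y1 * f (ℓ ^ k2) + f y2 * f (ℓ ^ k1) := by rw [h1, h2]
            _ = f (y1 * ℓ ^ k2 + y2 * ℓ ^ k1) := by rw [map_add, map_mul, map_mul]
      · rintro a t ht ⟨k1, y1, hy1, h1⟩
        obtain ⟨j, m, hm, hma⟩ := auxA hℓM a.2
        refine ⟨j + k1, m * y1, ?_, ?_⟩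
        · have h1' : m * y1 ∈ Mi K n ^ j * (I * Mi K n ^ k1) := Ideal.mul_mem_mul hm hy1
          have e : Mi K n ^ j * (I * Mi K n ^ k1) = I * Mi K n ^ (j + k1) := by
            rw [pow_add]; ring
          rwa [e] at h1'
        · have ec : ((a • t : quadExt ℓ) : Localization.Away ℓ)
              = (a : Localization.Away ℓ) * (t : Localization.Away ℓ) := by
            rw [smul_eq_mul]; exact Subalgebra.coe_mul _ _ _
          calc ((a • t : quadExt ℓ) : Localization.Away ℓ) * f (ℓ ^ (j + k1))
              = ((a : Localization.Away ℓ) * f (ℓ ^ j))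
                * ((t : Localization.Away ℓ) * f (ℓ ^ k1)) := by
                rw [ec, pow_add, map_mul]; ring
            _ = f m * f y1 := by rw [hma, h1]
            _ = f (m * y1) := (map_mul f m y1).symm
    obtain ⟨k, y, hy, h⟩ := key _ hx
    have hxy : x * ℓ ^ k = y := hinj (by rw [map_mul]; exact h)
    exact ⟨k, Ideal.mem_colon_span_singleton.mpr (hxy ▸ hy)⟩
  · rintro ⟨k, hk⟩
    rw [Ideal.mem_colon_span_singleton] at hk
    rw [contraction, Ideal.mem_comap]
    have key : ∀ y ∈ I * Mi K n ^ k, ∃ s : quadExt ℓ,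
        s ∈ Ideal.map (algebraMap (Rn K n) (quadExt ℓ)) I ∧
          (s : Localization.Away ℓ) * f (ℓ ^ k) = f y := by
      intro y hy
      refine Submodule.mul_induction_on hy ?_ ?_
      · intro a ha m hm
        obtain ⟨s0, hs0S, hs0⟩ := auxB hℓM k m hm
        refine ⟨algebraMap _ _ a * ⟨s0, hs0S⟩,
          Ideal.mul_mem_right _ _ (Ideal.mem_map_of_mem _ ha), ?_⟩
        rw [Subalgebra.coe_mul, mul_assoc]
        show f a * _ = _
        rw [hs0, ← map_mul]
      · rintro y1 y2 ⟨s1, hs1, h1⟩ ⟨s2, hs2, h2⟩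
        exact ⟨s1 + s2, add_mem hs1 hs2, by
          rw [Subalgebra.coe_add, add_mul, h1, h2, map_add]⟩
    obtain ⟨s, hs, h⟩ := key _ hk
    have hu : IsUnit (f (ℓ ^ k)) :=
      IsLocalization.map_units (M := Submonoid.powers ℓ) _ ⟨ℓ ^ k, ⟨k, rfl⟩⟩
    have hse : (s : Localization.Away ℓ) = f x := by
      apply hu.mul_right_cancel
      rw [h, ← map_mul]
    have : s = algebraMap (Rn K n) (quadExt ℓ) x := Subtype.ext hse
    exact this ▸ hs

end
end

section
/- Let R = K[x_1,...,x_n], ℓ a nonzero linear form, I a homogeneous ideal, S = R[M/ℓ], and J = IS ∩ R. Then for every degree j, the degree-j component J_j equals the degree-j component of the ideal (I_⟨j⟩^sat : ℓ^∞), where I_⟨j⟩ is the ideal generated by the degree-j forms in I and sat denotes saturation with respect to M. -/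
open MvPolynomial

noncomputable section

variable {K : Type} [Field K] {n : ℕ}

section AuxLemmas

variable {K : Type} [Field K] {n : ℕ}

lemma degree_add' (a b : Fin n →₀ ℕ) : (a + b).degree = a.degree + b.degree := by
  simp [Finsupp.degree_eq_weight_one, map_add]

lemma degree_single' (i : Fin n) : (Finsupp.single i 1).degree = 1 := by
  simp [Finsupp.degree_eq_weight_one, Finsupp.weight_apply, Finsupp.sum_single_index]

lemma exists_split (t : ℕ) : ∀ (α : Fin n →₀ ℕ), t ≤ α.degree →
    ∃ β γ : Fin n →₀ ℕ, α = β + γ ∧ β.degree = t := by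
  induction t with
  | zero => exact fun α _ => ⟨0, α, by simp, by simp⟩
  | succ t ih =>
    intro α hα
    obtain ⟨β, γ, rfl, hβ⟩ := ih α (Nat.le_of_succ_le hα)
    rw [degree_add'] at hα
    have hγ : 1 ≤ γ.degree := by omega
    have hne : γ ≠ 0 := by
      intro h; rw [h] at hγ; simp at hγ
    obtain ⟨i, hi⟩ : ∃ i, γ i ≠ 0 := by
      by_contra h; push_neg at h; exact hne (Finsupp.ext h)
    have hle : Finsupp.single i 1 ≤ γ := by
      rw [Finsupp.single_le_iff]; omega
    refine ⟨β + Finsupp.single i 1, γ - Finsupp.single i 1, ?_, ?_⟩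
    · rw [add_assoc]
      congr 1
      rw [add_comm]
      exact (tsub_add_cancel_of_le hle).symm
    · rw [degree_add', degree_single', hβ]

lemma X_mem_Mi (i : Fin n) : (X i : Rn K n) ∈ Mi K n :=
  Ideal.subset_span ⟨i, rfl⟩

lemma support_degree_of_mem_Mi_pow : ∀ (k : ℕ) (p : Rn K n), p ∈ Mi K n ^ k →
    ∀ α ∈ p.support, k ≤ α.degree := by
  intro k
  induction k with
  | zero => intro p _ α _; exact Nat.zero_le _
  | succ k ih =>
    intro p hp
    rw [pow_succ] at hp
    refine Submodule.mul_induction_on hp ?_ ?_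
    · intro a ha b hb α hα
      classical
      have hsub := MvPolynomial.support_mul a b hα
      rw [Finset.mem_add] at hsub
      obtain ⟨β, hβ, γ, hγ, rfl⟩ := hsub
      have h1 : k ≤ β.degree := ih a ha β hβ
      have h2 : 1 ≤ γ.degree := by
        have hγ0 : γ ≠ 0 := by
          intro h
          subst h
          have hb' : b ∈ Ideal.span (X '' (Set.univ : Set (Fin n)) : Set (Rn K n)) := by
            rwa [Set.image_univ]
          rw [mem_ideal_span_X_image] at hb'
          obtain ⟨i, -, hi⟩ := hb' 0 hγ
          simp at hi
        have := (Finsupp.degree_eq_zero_iff γ).not.mpr hγ0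
        omega
      rw [degree_add']; omega
    · intro x y hx hy α hα
      have := MvPolynomial.support_add hα
      rw [Finset.mem_union] at this
      rcases this with h | h
      exacts [hx α h, hy α h]

lemma homogeneousComponent_eq_zero_of_mem_Mi_pow {k e : ℕ} {p : Rn K n}
    (hp : p ∈ Mi K n ^ k) (he : e < k) : homogeneousComponent e p = 0 := by
  ext α
  rw [coeff_homogeneousComponent]
  split_ifs with h
  · rw [coeff_zero]
    by_contra hc
    have := support_degree_of_mem_Mi_pow k p hp α (MvPolynomial.mem_support_iff.mpr hc)
    omega
  · rw [coeff_zero]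

lemma mem_Mi_pow_of_isHomogeneous : ∀ (s : ℕ) (p : Rn K n), p.IsHomogeneous s →
    p ∈ Mi K n ^ s := by
  intro s
  induction s with
  | zero => intro p _; simp [Ideal.one_eq_top]
  | succ s ih =>
    intro p hp
    rw [← p.support_sum_monomial_coeff]
    refine Ideal.sum_mem _ ?_
    intro α hα
    have hdeg : α.degree = s + 1 := by
      have := hp (MvPolynomial.mem_support_iff.mp hα)
      rw [Finsupp.degree_eq_weight_one]; exact this
    obtain ⟨i, hi⟩ : ∃ i, α i ≠ 0 := by
      by_contra h; push_neg at h
      have : α = 0 := Finsupp.ext h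
      rw [this] at hdeg; simp at hdeg
    have hle : Finsupp.single i 1 ≤ α := by rw [Finsupp.single_le_iff]; omega
    have hsplit : α = Finsupp.single i 1 + (α - Finsupp.single i 1) := by
      rw [add_comm]; exact (tsub_add_cancel_of_le hle).symm
    have hdeg2 : (α - Finsupp.single i 1).degree = s := by
      have := degree_add' (Finsupp.single i 1) (α - Finsupp.single i 1)
      rw [← hsplit, degree_single'] at this
      omega
    have : (monomial α (coeff α p) : Rn K n)
        = X i * monomial (α - Finsupp.single i 1) (coeff α p) := by
      rw [X, monomial_mul, one_mul, ← hsplit]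
    rw [this, pow_succ']
    exact Ideal.mul_mem_mul (X_mem_Mi i)
      (ih _ (isHomogeneous_monomial _ hdeg2))

lemma mem_Mi_of_isHomogeneous_one {p : Rn K n} (hp : p.IsHomogeneous 1) : p ∈ Mi K n := by
  have := mem_Mi_pow_of_isHomogeneous 1 p hp
  rwa [pow_one] at this

end AuxLemmas
section AuxLemmas2

variable {K : Type} [Field K] {n : ℕ}

lemma hc_mul_left {h : Rn K n} {d : ℕ} (hh : h.IsHomogeneous d) (r : Rn K n) (s : ℕ) :
    homogeneousComponent (d + s) (h * r) = h * homogeneousComponent s r := by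
  induction r using MvPolynomial.induction_on' with
  | monomial u a =>
    have hm : (monomial u a : Rn K n).IsHomogeneous u.degree := isHomogeneous_monomial _ rfl
    have hmul : (h * monomial u a).IsHomogeneous (d + u.degree) := hh.mul hm
    rw [homogeneousComponent_of_mem ((mem_homogeneousSubmodule _ _).mpr hmul),
      homogeneousComponent_of_mem ((mem_homogeneousSubmodule _ _).mpr hm)]
    by_cases hs : s = u.degree
    · rw [if_pos hs, if_pos (by omega)]
    · rw [if_neg hs, if_neg (by omega), mul_zero]
  | add p q hp hq =>
    rw [mul_add, map_add, map_add, hp, hq, mul_add]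

lemma hc_mul_left_lt {h : Rn K n} {d : ℕ} (hh : h.IsHomogeneous d) (r : Rn K n) {e : ℕ}
    (he : e < d) : homogeneousComponent e (h * r) = 0 := by
  induction r using MvPolynomial.induction_on' with
  | monomial u a =>
    have hmul : (h * monomial u a).IsHomogeneous (d + u.degree) :=
      hh.mul (isHomogeneous_monomial _ rfl)
    rw [homogeneousComponent_of_mem ((mem_homogeneousSubmodule _ _).mpr hmul),
      if_neg (by omega)]
  | add p q hp hq => rw [mul_add, map_add, hp, hq, add_zero]

lemma mul_mem_comp {I : Ideal (Rn K n)} {j d e : ℕ} {a p : Rn K n} (ha : a ∈ I)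
    (had : a.IsHomogeneous d) (hdj : d ≤ j) (hp : p.IsHomogeneous e) (hde : j ≤ d + e) :
    a * p ∈ comp I j := by
  rw [← p.support_sum_monomial_coeff, Finset.mul_sum]
  refine Ideal.sum_mem _ ?_
  intro α hα
  have hdeg : α.degree = e := by
    have := hp (MvPolynomial.mem_support_iff.mp hα)
    rw [Finsupp.degree_eq_weight_one]; exact this
  obtain ⟨β, γ, rfl, hβ⟩ := exists_split (j - d) α (by omega)
  have : (monomial (β + γ) (coeff (β + γ) p) : Rn K n)
      = monomial β (coeff (β + γ) p) * monomial γ 1 := by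
    rw [monomial_mul, mul_one]
  rw [this, ← mul_assoc]
  refine Ideal.mul_mem_right _ _ (Ideal.subset_span ⟨I.mul_mem_right _ ha, ?_⟩)
  have : d + (j - d) = j := by omega
  exact this ▸ had.mul (isHomogeneous_monomial _ hβ)

lemma component_mem_comp_of_mem_mul {I : Ideal (Rn K n)} (hI : IsHomog I) {j k : ℕ} :
    ∀ g ∈ I * Mi K n ^ k, homogeneousComponent (j + k) g ∈ comp I j := by
  intro g hg
  refine Submodule.mul_induction_on hg ?_ ?_
  · intro a ha m hm
    have ha' : a * m = ∑ d ∈ Finset.range (a.totalDegree + 1),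
        homogeneousComponent d a * m := by
      rw [← Finset.sum_mul, a.sum_homogeneousComponent]
    rw [ha', map_sum]
    refine Ideal.sum_mem _ ?_
    intro d _
    have hhom : (homogeneousComponent d a).IsHomogeneous d :=
      homogeneousComponent_isHomogeneous d a
    by_cases hdjk : d ≤ j + k
    · have heq : homogeneousComponent (j + k) (homogeneousComponent d a * m)
          = homogeneousComponent d a * homogeneousComponent (j + k - d) m := by
        have := hc_mul_left hhom m (j + k - d)
        rwa [show d + (j + k - d) = j + k by omega] at this
      rw [heq]
      by_cases hdj : d ≤ j
      · exact mul_mem_comp (hI a ha d) hhom hdj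
          (homogeneousComponent_isHomogeneous (j + k - d) m) (by omega)
      · rw [homogeneousComponent_eq_zero_of_mem_Mi_pow hm (by omega), mul_zero]
        exact zero_mem _
    · rw [hc_mul_left_lt hhom m (by omega)]
      exact zero_mem _
  · intro x y hx hy
    rw [map_add]
    exact add_mem hx hy

lemma comp_le_Mi_pow {I : Ideal (Rn K n)} {j : ℕ} : comp I j ≤ Mi K n ^ j :=
  Ideal.span_le.mpr fun _ hf => mem_Mi_pow_of_isHomogeneous _ _ hf.2

lemma component_mem_of_mem_comp {I : Ideal (Rn K n)} {j : ℕ} {g : Rn K n}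
    (hg : g ∈ comp I j) (s : ℕ) :
    homogeneousComponent (j + s) g ∈ I * Mi K n ^ s := by
  obtain ⟨c, hsupp, rfl⟩ := Submodule.mem_span_set.mp hg
  rw [Finsupp.sum, map_sum]
  refine Submodule.sum_mem _ ?_
  intro a ha
  obtain ⟨haI, haH⟩ : a ∈ I ∧ a.IsHomogeneous j := hsupp ha
  rw [smul_eq_mul, mul_comm (c a) a, hc_mul_left haH (c a) s]
  exact Submodule.mul_mem_mul haI
    (mem_Mi_pow_of_isHomogeneous _ _ (homogeneousComponent_isHomogeneous s (c a)))

end AuxLemmas2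
section AuxLemmas3

variable {K : Type} [Field K] {n : ℕ}

lemma mem_colonInfty_iff {J : Ideal (Rn K n)} {g f : Rn K n} :
    f ∈ colonInfty J g ↔ ∃ k, f * g ^ k ∈ J := by
  have hmono : Monotone fun k : ℕ => J.colon (Ideal.span {g ^ k}) := by
    refine monotone_nat_of_le_succ ?_
    intro k r hr
    rw [Ideal.mem_colon_span_singleton] at hr ⊢
    rw [pow_succ, ← mul_assoc]
    exact J.mul_mem_right _ hr
  rw [colonInfty, Submodule.mem_iSup_of_directed _ hmono.directed_le]
  simp only [Ideal.mem_colon_span_singleton]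

lemma le_sat {J : Ideal (Rn K n)} : J ≤ sat J := by
  intro r hr
  refine le_iSup (fun k : ℕ => J.colon ((Mi K n ^ k : Ideal (Rn K n)) : Set (Rn K n))) 0 ?_
  rw [Submodule.mem_colon]
  intro p _
  rw [smul_eq_mul]
  exact J.mul_mem_right p hr

lemma mem_sat_iff {J : Ideal (Rn K n)} {f : Rn K n} :
    f ∈ sat J ↔ ∃ t, ∀ m ∈ Mi K n ^ t, f * m ∈ J := by
  have hmono : Monotone fun t : ℕ => J.colon ((Mi K n ^ t : Ideal (Rn K n)) : Set (Rn K n)) := by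
    refine monotone_nat_of_le_succ ?_
    intro t r hr
    rw [Submodule.mem_colon] at hr ⊢
    intro p hp
    exact hr p (Ideal.pow_le_pow_right (Nat.le_succ t) hp)
  rw [sat, Submodule.mem_iSup_of_directed _ hmono.directed_le]
  refine exists_congr fun t => ?_
  rw [Submodule.mem_colon]
  constructor
  · intro h m hm; simpa [smul_eq_mul] using h m hm
  · intro h m hm; simpa [smul_eq_mul] using h m hm

lemma keyR {ℓ : Rn K n} (hℓ : ℓ.IsHomogeneous 1) {I : Ideal (Rn K n)} (hI : IsHomog I) {j : ℕ}
    {f : Rn K n} (hf : f.IsHomogeneous j) :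
    (∃ k, f * ℓ ^ k ∈ I * Mi K n ^ k) ↔ f ∈ colonInfty (sat (comp I j)) ℓ := by
  rw [mem_colonInfty_iff]
  constructor
  · rintro ⟨k, hk⟩
    refine ⟨k, le_sat ?_⟩
    have hfl : (f * ℓ ^ k).IsHomogeneous (j + k) := by
      have := hf.mul (hℓ.pow k)
      rwa [one_mul] at this
    have hcomp : homogeneousComponent (j + k) (f * ℓ ^ k) = f * ℓ ^ k := by
      rw [homogeneousComponent_of_mem ((mem_homogeneousSubmodule _ _).mpr hfl), if_pos rfl]
    have := component_mem_comp_of_mem_mul hI (f * ℓ ^ k) hk (j := j) (k := k)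
    rwa [hcomp] at this
  · rintro ⟨k, hk⟩
    obtain ⟨t, ht⟩ := mem_sat_iff.mp hk
    have hlt : ℓ ^ t ∈ Mi K n ^ t :=
      Ideal.pow_mem_pow (mem_Mi_of_isHomogeneous_one hℓ) t
    have h2 : f * ℓ ^ (k + t) ∈ comp I j := by
      have := ht (ℓ ^ t) hlt
      rwa [mul_assoc, ← pow_add] at this
    have hfl : (f * ℓ ^ (k + t)).IsHomogeneous (j + (k + t)) := by
      have := hf.mul (hℓ.pow (k + t))
      rwa [one_mul] at this
    have := component_mem_of_mem_comp h2 (k + t)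
    rw [homogeneousComponent_of_mem ((mem_homogeneousSubmodule _ _).mpr hfl), if_pos rfl] at this
    exact ⟨k + t, this⟩

end AuxLemmas3
section AuxLemmas4

variable {K : Type} [Field K] {n : ℕ}

local notation "φ" ℓ => algebraMap (Rn K n) (Localization.Away ℓ)

lemma unit_ell (ℓ : Rn K n) :
    IsUnit (algebraMap (Rn K n) (Localization.Away ℓ) ℓ) :=
  IsLocalization.map_units (M := Submonoid.powers ℓ) (Localization.Away ℓ)
    ⟨ℓ, Submonoid.mem_powers ℓ⟩

/-- Every element of `M^k` is `ℓ^k` times an element of `S`. -/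
lemma exists_div_pow (ℓ : Rn K n) : ∀ (k : ℕ) (g : Rn K n), g ∈ Mi K n ^ k →
    ∃ s ∈ quadExt ℓ,
      s * (algebraMap (Rn K n) (Localization.Away ℓ) ℓ) ^ k
        = algebraMap (Rn K n) (Localization.Away ℓ) g := by
  intro k
  induction k with
  | zero =>
    intro g _
    exact ⟨algebraMap _ _ g, Subalgebra.algebraMap_mem _ g, by rw [pow_zero, mul_one]⟩
  | succ k ih =>
    intro g hg
    rw [pow_succ'] at hg
    refine Submodule.mul_induction_on hg ?_ ?_
    · intro m hm b hb
      obtain ⟨s, hs, hseq⟩ := ih b hb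
      obtain ⟨u, hu⟩ := unit_ell ℓ
      set x : Localization.Away ℓ := algebraMap _ _ m * (↑u⁻¹ : _) with hxdef
      have hx : x * algebraMap _ _ ℓ = algebraMap _ _ m := by
        rw [hxdef, ← hu, mul_assoc, Units.inv_mul, mul_one]
      have hxS : x ∈ quadExt ℓ := Algebra.subset_adjoin ⟨m, hm, hx⟩
      refine ⟨x * s, mul_mem hxS hs, ?_⟩
      rw [pow_succ]
      calc x * s * ((algebraMap _ _ ℓ) ^ k * algebraMap _ _ ℓ)
          = (x * algebraMap _ _ ℓ) * (s * (algebraMap _ _ ℓ) ^ k) := by ring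
        _ = algebraMap _ _ m * algebraMap _ _ b := by rw [hx, hseq]
        _ = algebraMap _ _ (m * b) := (map_mul _ _ _).symm
    · rintro p q ⟨s1, hs1, he1⟩ ⟨s2, hs2, he2⟩
      exact ⟨s1 + s2, add_mem hs1 hs2, by rw [add_mul, he1, he2, ← map_add]⟩

set_option synthInstance.maxHeartbeats 1000000 in
set_option maxHeartbeats 1000000 in
/-- Every element of `S` is of the form `g/ℓ^k` with `g ∈ M^k`. -/
lemma quadExt_elem {ℓ : Rn K n} (hℓM : ℓ ∈ Mi K n) :
    ∀ s : Localization.Away ℓ, s ∈ quadExt ℓ →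
    ∃ (k : ℕ) (g : Rn K n), g ∈ Mi K n ^ k ∧
      s * (algebraMap (Rn K n) (Localization.Away ℓ) ℓ) ^ k
        = algebraMap (Rn K n) (Localization.Away ℓ) g := by
  intro s hs
  have hs' : s ∈ Algebra.adjoin (Rn K n)
      {x | ∃ m ∈ Mi K n,
        x * algebraMap (Rn K n) (Localization.Away ℓ) ℓ
          = algebraMap (Rn K n) (Localization.Away ℓ) m} := hs
  clear hs
  induction hs' using Algebra.adjoin_induction with
  | mem x hx =>
    obtain ⟨m, hm, hx⟩ := hx
    exact ⟨1, m, by rwa [pow_one], by rwa [pow_one]⟩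
  | algebraMap r =>
    exact ⟨0, r, by simp [Ideal.one_eq_top], by rw [pow_zero, mul_one]⟩
  | add x y hx hy ihx ihy =>
    obtain ⟨k1, g1, hg1, he1⟩ := ihx
    obtain ⟨k2, g2, hg2, he2⟩ := ihy
    refine ⟨k1 + k2, g1 * ℓ ^ k2 + g2 * ℓ ^ k1, ?_, ?_⟩
    · refine Ideal.add_mem _ ?_ ?_
      · rw [pow_add]
        exact Ideal.mul_mem_mul hg1 (Ideal.pow_mem_pow hℓM k2)
      · rw [add_comm k1 k2, pow_add]
        exact Ideal.mul_mem_mul hg2 (Ideal.pow_mem_pow hℓM k1)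
    · simp only [map_add, map_mul, map_pow]
      rw [← he1, ← he2, pow_add]
      ring
  | mul x y hx hy ihx ihy =>
    obtain ⟨k1, g1, hg1, he1⟩ := ihx
    obtain ⟨k2, g2, hg2, he2⟩ := ihy
    refine ⟨k1 + k2, g1 * g2, ?_, ?_⟩
    · rw [pow_add]
      exact Ideal.mul_mem_mul hg1 hg2
    · simp only [map_mul]
      rw [← he1, ← he2, pow_add]
      ring

end AuxLemmas4
section AuxLemmas5

set_option synthInstance.maxHeartbeats 1000000
set_option maxHeartbeats 1000000

variable {K : Type} [Field K] {n : ℕ}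

lemma mapI_elem {ℓ : Rn K n} {I : Ideal (Rn K n)} (k : ℕ) :
    ∀ a ∈ I * Mi K n ^ k, ∀ x : ↥(quadExt ℓ),
      (x : Localization.Away ℓ) * (algebraMap (Rn K n) (Localization.Away ℓ) ℓ) ^ k
        = algebraMap (Rn K n) (Localization.Away ℓ) a →
      x ∈ Ideal.map (algebraMap (Rn K n) ↥(quadExt ℓ)) I := by
  intro a ha
  refine Submodule.mul_induction_on'
    (C := fun a _ => ∀ x : ↥(quadExt ℓ),
      (x : Localization.Away ℓ) * (algebraMap (Rn K n) (Localization.Away ℓ) ℓ) ^ k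
        = algebraMap (Rn K n) (Localization.Away ℓ) a →
      x ∈ Ideal.map (algebraMap (Rn K n) ↥(quadExt ℓ)) I) ?_ ?_ ha
  · intro b hb g hg x hx
    obtain ⟨s, hsS, hseq⟩ := exists_div_pow ℓ k g hg
    have hunit : IsUnit ((algebraMap (Rn K n) (Localization.Away ℓ) ℓ) ^ k) :=
      (unit_ell ℓ).pow k
    set y : ↥(quadExt ℓ) := algebraMap (Rn K n) ↥(quadExt ℓ) b * ⟨s, hsS⟩ with hy
    have hycoe : (y : Localization.Away ℓ)
        = algebraMap (Rn K n) (Localization.Away ℓ) b * s := rfl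
    have hxy : x = y := by
      apply Subtype.ext
      apply hunit.mul_right_cancel
      rw [hx, hycoe, mul_assoc, hseq, ← map_mul]
    rw [hxy, hy]
    exact Ideal.mul_mem_right _ _ (Ideal.mem_map_of_mem _ hb)
  · intro p hp q hq ihp ihq x hx
    have hpM : p ∈ Mi K n ^ k := Ideal.mul_le_right hp
    obtain ⟨s1, hs1, he1⟩ := exists_div_pow ℓ k p hpM
    have h1 : (⟨s1, hs1⟩ : ↥(quadExt ℓ)) ∈ Ideal.map (algebraMap (Rn K n) ↥(quadExt ℓ)) I :=
      ihp ⟨s1, hs1⟩ he1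
    have h2 : x - ⟨s1, hs1⟩ ∈ Ideal.map (algebraMap (Rn K n) ↥(quadExt ℓ)) I := by
      refine ihq _ ?_
      have hcoe : ((x - ⟨s1, hs1⟩ : ↥(quadExt ℓ)) : Localization.Away ℓ)
          = (x : Localization.Away ℓ) - s1 := rfl
      rw [hcoe, sub_mul, hx, he1, map_add, add_sub_cancel_left]
    have h3 := add_mem h1 h2
    have h4 : (⟨s1, hs1⟩ : ↥(quadExt ℓ)) + (x - ⟨s1, hs1⟩) = x := by ring
    rwa [h4] at h3

lemma mem_contraction_iff {ℓ : Rn K n} (hℓ0 : ℓ ≠ 0) (hℓM : ℓ ∈ Mi K n)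
    {I : Ideal (Rn K n)} (f : Rn K n) :
    f ∈ contraction I ℓ ↔ ∃ k, f * ℓ ^ k ∈ I * Mi K n ^ k := by
  rw [contraction, Ideal.mem_comap]
  constructor
  · intro hf
    have key : ∃ (k : ℕ) (a : Rn K n), a ∈ I * Mi K n ^ k ∧
        ((algebraMap (Rn K n) ↥(quadExt ℓ) f : ↥(quadExt ℓ)) : Localization.Away ℓ)
          * (algebraMap (Rn K n) (Localization.Away ℓ) ℓ) ^ k
          = algebraMap (Rn K n) (Localization.Away ℓ) a := by
      have hf' : algebraMap (Rn K n) ↥(quadExt ℓ) f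
          ∈ Submodule.span ↥(quadExt ℓ) ((algebraMap (Rn K n) ↥(quadExt ℓ)) '' I) := hf
      refine Submodule.span_induction
        (p := fun (x : ↥(quadExt ℓ)) _ => ∃ (k : ℕ) (a : Rn K n), a ∈ I * Mi K n ^ k ∧
          (x : Localization.Away ℓ)
            * (algebraMap (Rn K n) (Localization.Away ℓ) ℓ) ^ k
            = algebraMap (Rn K n) (Localization.Away ℓ) a)
        ?_ ?_ ?_ ?_ hf'
      · rintro x ⟨b, hb, rfl⟩
        refine ⟨0, b, by simpa using hb, ?_⟩
        rw [pow_zero, mul_one]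
        rfl
      · exact ⟨0, 0, zero_mem _, by simp⟩
      · rintro x y hx hy ⟨k1, a1, ha1, he1⟩ ⟨k2, a2, ha2, he2⟩
        refine ⟨k1 + k2, a1 * ℓ ^ k2 + a2 * ℓ ^ k1, ?_, ?_⟩
        · refine Ideal.add_mem _ ?_ ?_
          · have := Ideal.mul_mem_mul ha1 (Ideal.pow_mem_pow hℓM k2)
            rwa [mul_assoc, ← pow_add] at this
          · have := Ideal.mul_mem_mul ha2 (Ideal.pow_mem_pow hℓM k1)
            rwa [mul_assoc, ← pow_add, add_comm k2 k1] at this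
        · have hcoe : ((x + y : ↥(quadExt ℓ)) : Localization.Away ℓ)
              = (x : Localization.Away ℓ) + y := rfl
          simp only [hcoe, map_add, map_mul, map_pow]
          rw [← he1, ← he2, pow_add]
          ring
      · rintro r x hx ⟨k1, a1, ha1, he1⟩
        obtain ⟨k2, g, hg, he2⟩ := quadExt_elem hℓM (r : Localization.Away ℓ) r.2
        refine ⟨k1 + k2, g * a1, ?_, ?_⟩
        · have := Ideal.mul_mem_mul hg ha1
          have heq : Mi K n ^ k2 * (I * Mi K n ^ k1) = I * Mi K n ^ (k1 + k2) := by
            rw [pow_add]; ring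
          rwa [heq] at this
        · have hcoe : ((r • x : ↥(quadExt ℓ)) : Localization.Away ℓ)
              = (r : Localization.Away ℓ) * x := rfl
          simp only [hcoe, map_mul]
          rw [← he1, ← he2, pow_add]
          ring
    obtain ⟨k, a, ha, he⟩ := key
    have hfeq : ((algebraMap (Rn K n) ↥(quadExt ℓ) f : ↥(quadExt ℓ)) : Localization.Away ℓ)
        = algebraMap (Rn K n) (Localization.Away ℓ) f := rfl
    rw [hfeq, ← map_pow, ← map_mul] at he
    have hinj : Function.Injective (algebraMap (Rn K n) (Localization.Away ℓ)) :=
      IsLocalization.injective _ (powers_le_nonZeroDivisors_of_noZeroDivisors hℓ0)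
    exact ⟨k, hinj he ▸ ha⟩
  · rintro ⟨k, hk⟩
    refine mapI_elem k _ hk (algebraMap _ _ f) ?_
    have hfeq : ((algebraMap (Rn K n) ↥(quadExt ℓ) f : ↥(quadExt ℓ)) : Localization.Away ℓ)
        = algebraMap (Rn K n) (Localization.Away ℓ) f := rfl
    rw [hfeq, ← map_pow, ← map_mul]

end AuxLemmas5
/-- the degree-`j` component of `J = IS ∩ R` equals the degree-`j`
component of `(I_⟨j⟩^sat : ℓ^∞)`. -/
theorem stmt1 (K : Type) [Field K] (n : ℕ) (ℓ : Rn K n) (hℓ0 : ℓ ≠ 0)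
    (hℓ : ℓ.IsHomogeneous 1) (I : Ideal (Rn K n)) (hI : IsHomog I) (j : ℕ) :
    ∀ f : Rn K n, f.IsHomogeneous j →
      (f ∈ contraction I ℓ ↔ f ∈ colonInfty (sat (comp I j)) ℓ) := by
  intro f hf
  rw [mem_contraction_iff hℓ0 (mem_Mi_of_isHomogeneous_one hℓ)]
  exact keyR hℓ hI hf

end
end

section
/- Let I be a homogeneous ideal of R = K[x_1,...,x_n] with minimal generators in degrees d_1 < d_2 < ... < d_p. Then the union over all j ≥ o(I) of Ass(R/I_⟨j⟩) equals the union of Ass(R/I_⟨d_1⟩), ..., Ass(R/I_⟨d_p⟩), and {M}; in particular this union is finite. -/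
open MvPolynomial

noncomputable section

variable {K : Type} [Field K] {n : ℕ}

open Pointwise

theorem hc_mul_left_s2 {e : ℕ} {s : Rn K n} (hs : s.IsHomogeneous e) (p : Rn K n) (d : ℕ) :
    homogeneousComponent d (s * p) =
      if e ≤ d then s * homogeneousComponent (d - e) p else 0 := by
  conv_lhs => rw [← sum_homogeneousComponent p, Finset.mul_sum, map_sum]
  have key : ∀ i : ℕ, homogeneousComponent d (s * homogeneousComponent i p) =
      if d = e + i then s * homogeneousComponent i p else 0 := fun i =>
    homogeneousComponent_of_mem (hs.mul (homogeneousComponent_isHomogeneous i p))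
  simp only [key]
  rcases le_or_gt e d with h | h
  · rw [Finset.sum_congr rfl (fun x _ =>
      if_congr (show (d = e + x) ↔ (x = d - e) by omega) rfl rfl)]
    rw [Finset.sum_ite_eq' (Finset.range (p.totalDegree + 1)) (d-e)
      (fun i => s * homogeneousComponent i p)]
    simp only [Finset.mem_range]
    by_cases hm : d - e < p.totalDegree + 1
    · rw [if_pos hm, if_pos h]
    · rw [if_neg hm, if_pos h, homogeneousComponent_eq_zero _ p (by omega), mul_zero]
  · rw [Finset.sum_eq_zero (fun x _ => by rw [if_neg (by omega)]), if_neg (by omega)]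

theorem monomial_mem_Mi {v : Fin n →₀ ℕ} (hv : v ≠ 0) (c : K) :
    (monomial v c : Rn K n) ∈ Mi K n := by
  obtain ⟨i, hi⟩ : ∃ i, v i ≠ 0 := by
    by_contra h; push_neg at h; exact hv (Finsupp.ext fun i => h i)
  have hv' : v = (v - Finsupp.single i 1) + Finsupp.single i 1 := by
    ext j
    rcases eq_or_ne j i with hj | hj
    · subst hj
      simp only [Finsupp.add_apply, Finsupp.tsub_apply, Finsupp.single_apply, eq_self_iff_true,
        if_true]
      omega
    · simp [Finsupp.single_apply, Ne.symm hj]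
  rw [hv', monomial_add_single, pow_one]
  exact Ideal.mul_mem_left _ _ (Ideal.subset_span ⟨i, rfl⟩)

theorem Mi_eq_ker : Mi K n = RingHom.ker (constantCoeff : Rn K n →+* K) := by
  apply le_antisymm
  · rw [Mi, Ideal.span_le]
    rintro _ ⟨i, rfl⟩
    simp [RingHom.mem_ker]
  · intro p hp
    rw [RingHom.mem_ker] at hp
    rw [p.as_sum]
    refine Ideal.sum_mem _ fun v hv => monomial_mem_Mi (fun h0 => ?_) _
    subst h0
    rw [MvPolynomial.mem_support_iff] at hv
    exact hv hp

theorem Mi_isMaximal : (Mi K n).IsMaximal := by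
  rw [Mi_eq_ker]
  exact RingHom.ker_isMaximal_of_surjective _ fun k => ⟨C k, constantCoeff_C _ k⟩


def TT (G : Set (Rn K n)) (d : ℕ) : Submodule K (Rn K n) :=
  Submodule.span K {p | p.IsHomogeneous d ∧
    ∃ (c : Rn K n) (i : Fin n) (h : Rn K n), h ∈ G ∧ p = c * (X i * h)}

theorem mulTT {G : Set (Rn K n)} {q : Rn K n} {c : ℕ} (hq : q.IsHomogeneous c)
    {t : Rn K n} {d : ℕ} (ht : t ∈ TT G d) : q * t ∈ TT G (c + d) := by
  induction ht using Submodule.span_induction with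
  | mem p hp =>
    obtain ⟨hph, c₀, i, h, hh, rfl⟩ := hp
    exact Submodule.subset_span ⟨hq.mul hph, q * c₀, i, h, hh, (mul_assoc q c₀ _).symm⟩
  | zero => simpa using (TT G (c + d)).zero_mem
  | add x y _ _ hx hy => rw [mul_add]; exact (TT G (c+d)).add_mem hx hy
  | smul κ x _ hx => rw [mul_smul_comm]; exact (TT G (c+d)).smul_mem κ hx

theorem claimA {G : Set (Rn K n)} (hG : ∀ h ∈ G, ∃ b, h.IsHomogeneous b)
    {f : Rn K n} (hf : f ∈ Ideal.span ((Set.range (X : Fin n → Rn K n) : Set (Rn K n)) * G)) :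
    ∀ d, homogeneousComponent d f ∈ TT G d := by
  induction hf using Submodule.span_induction with
  | mem s hs =>
    intro d
    obtain ⟨x, ⟨i, rfl⟩, h, hh, rfl⟩ := hs
    obtain ⟨b, hb⟩ := hG h hh
    rw [homogeneousComponent_of_mem ((isHomogeneous_X K i).mul hb)]
    split
    · exact Submodule.subset_span ⟨by
        · rename_i heq; rw [heq]; exact (isHomogeneous_X K i).mul hb,
        1, i, h, hh, (one_mul _).symm⟩
    · exact (TT G d).zero_mem
  | zero => intro d; simp only [map_zero]; exact (TT G d).zero_mem
  | add x y _ _ hx hy => intro d; rw [map_add]; exact (TT G d).add_mem (hx d) (hy d)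
  | smul r x _ hx =>
    intro d
    have hrx : r • x = ∑ c ∈ Finset.range (r.totalDegree + 1),
        (homogeneousComponent c r) * x := by
      rw [← Finset.sum_mul, sum_homogeneousComponent]; rfl
    rw [hrx, map_sum]
    refine Submodule.sum_mem _ fun c _ => ?_
    rw [hc_mul_left_s2 (homogeneousComponent_isHomogeneous c r)]
    split
    · rename_i hle
      have := mulTT (homogeneousComponent_isHomogeneous c r) (hx (d - c))
      rwa [show c + (d - c) = d by omega] at this
    · exact Submodule.zero_mem _

theorem claimB {I : Ideal (Rn K n)} {d : ℕ}
    {p : Rn K n} (hp : p ∈ TT {h | h ∈ I ∧ ∃ b, h.IsHomogeneous b} d) :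
    p ∈ Mi K n * comp I (d - 1) := by
  have : TT {h : Rn K n | h ∈ I ∧ ∃ b, h.IsHomogeneous b} d ≤
      (Mi K n * comp I (d - 1)).restrictScalars K := by
    rw [TT, Submodule.span_le]
    rintro p ⟨hph, c, i, h, ⟨hhI, b, hb⟩, rfl⟩
    have hXh : (X i * h : Rn K n).IsHomogeneous (1 + b) := (isHomogeneous_X K i).mul hb
    have hself : c * (X i * h) = homogeneousComponent d (c * (X i * h)) := by
      rw [homogeneousComponent_of_mem hph, if_pos rfl]
    simp only [SetLike.mem_coe, Submodule.restrictScalars_mem]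
    rw [show c * (X i * h) = (X i * h) * c from mul_comm _ _] at hself ⊢
    rw [hself, hc_mul_left_s2 hXh]
    split
    · rename_i hle
      rw [mul_assoc]
      refine Ideal.mul_mem_mul (Ideal.subset_span ⟨i, rfl⟩) (Ideal.subset_span ?_)
      refine ⟨I.mul_mem_right _ hhI, ?_⟩
      have := hb.mul (homogeneousComponent_isHomogeneous (d - (1 + b)) c)
      rwa [show b + (d - (1 + b)) = d - 1 by omega] at this
    · exact Ideal.zero_mem _
  exact this hp

theorem claimB2 {I : Ideal (Rn K n)} {j : ℕ}
    {p : Rn K n} (hp : p ∈ TT {h | h ∈ I ∧ h.IsHomogeneous j} j) : p = 0 := by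
  have : TT {h : Rn K n | h ∈ I ∧ h.IsHomogeneous j} j ≤ (⊥ : Submodule K (Rn K n)) := by
    rw [TT, Submodule.span_le]
    rintro p ⟨hph, c, i, h, ⟨hhI, hb⟩, rfl⟩
    have hXh : (X i * h : Rn K n).IsHomogeneous (1 + j) := (isHomogeneous_X K i).mul hb
    have hself : c * (X i * h) = homogeneousComponent j (c * (X i * h)) := by
      rw [homogeneousComponent_of_mem hph, if_pos rfl]
    rw [show c * (X i * h) = (X i * h) * c from mul_comm _ _] at hself
    rw [hc_mul_left_s2 hXh] at hself
    rw [if_neg (by omega)] at hself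
    simp [show c * (X i * h) = 0 from (mul_comm c _) ▸ hself]
  simpa using this hp


theorem MiI_le_span {I : Ideal (Rn K n)} (hI : IsHomog I) :
    Mi K n * I ≤ Ideal.span ((Set.range (X : Fin n → Rn K n) : Set (Rn K n)) *
      {h | h ∈ I ∧ ∃ b, h.IsHomogeneous b}) := by
  refine Ideal.mul_le.2 fun r hr s hs => ?_
  induction hr using Submodule.span_induction with
  | mem x hx =>
    obtain ⟨i, rfl⟩ := hx
    rw [← sum_homogeneousComponent s, Finset.mul_sum]
    refine Submodule.sum_mem _ fun b _ => Ideal.subset_span ?_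
    exact ⟨X i, ⟨i, rfl⟩, homogeneousComponent b s,
      ⟨hI s hs b, b, homogeneousComponent_isHomogeneous b s⟩, rfl⟩
  | zero => rw [zero_mul]; exact Ideal.zero_mem _
  | add x y _ _ hx hy => rw [add_mul]; exact Ideal.add_mem _ hx hy
  | smul a x _ hx =>
    rw [smul_eq_mul, mul_assoc]
    exact Ideal.mul_mem_left _ _ hx

theorem MiComp_eq_span (I : Ideal (Rn K n)) (j : ℕ) :
    Mi K n * comp I j = Ideal.span ((Set.range (X : Fin n → Rn K n) : Set (Rn K n)) *
      {h | h ∈ I ∧ h.IsHomogeneous j}) := by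
  rw [Mi, comp, Ideal.span_mul_span']

/-- If every homogeneous degree-(j+1) element of I is in Mi*I, it is in Mi * comp I j. -/
theorem M1a {I : Ideal (Rn K n)} (hI : IsHomog I) {f : Rn K n} {j : ℕ}
    (hfh : f.IsHomogeneous (j + 1)) (hf : f ∈ Mi K n * I) :
    f ∈ Mi K n * comp I j := by
  have h1 := claimA (G := {h | h ∈ I ∧ ∃ b, h.IsHomogeneous b})
    (fun h hh => hh.2) (MiI_le_span hI hf) (j + 1)
  rw [homogeneousComponent_of_mem hfh, if_pos rfl] at h1
  have := claimB h1
  rwa [Nat.add_sub_cancel] at this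

/-- A nonzero homogeneous degree-j polynomial is not in Mi * comp I j. -/
theorem M1b {I : Ideal (Rn K n)} {f : Rn K n} {j : ℕ}
    (hfh : f.IsHomogeneous j) (hf0 : f ≠ 0) : f ∉ Mi K n * comp I j := by
  intro hf
  rw [MiComp_eq_span] at hf
  have h1 := claimA (G := {h | h ∈ I ∧ h.IsHomogeneous j})
    (fun h hh => ⟨j, hh.2⟩) hf j
  rw [homogeneousComponent_of_mem hfh, if_pos rfl] at h1
  exact hf0 (claimB2 h1)

theorem comp_succ {I : Ideal (Rn K n)} (hI : IsHomog I) {j : ℕ}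
    (H : ∀ f ∈ I, f.IsHomogeneous (j + 1) → f ∈ Mi K n * I) :
    comp I (j + 1) = Mi K n * comp I j := by
  apply le_antisymm
  · rw [comp, Ideal.span_le]
    rintro f ⟨hfI, hfh⟩
    exact M1a hI hfh (H f hfI hfh)
  · rw [MiComp_eq_span, Ideal.span_le]
    rintro _ ⟨x, ⟨i, rfl⟩, h, ⟨hhI, hhj⟩, rfl⟩
    refine Ideal.subset_span ⟨I.mul_mem_left _ hhI, ?_⟩
    have := (isHomogeneous_X K i).mul hhj
    rwa [Nat.add_comm 1 j] at this

theorem mem_ann_iff {J : Ideal (Rn K n)} (x r : Rn K n) :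
    r ∈ (Submodule.span (Rn K n) {(Ideal.Quotient.mk J x)}).annihilator ↔ r * x ∈ J := by
  rw [Submodule.mem_annihilator_span_singleton]
  have : r • (Ideal.Quotient.mk J x) = Ideal.Quotient.mk J (r * x) := rfl
  rw [this, Ideal.Quotient.eq_zero_iff_mem]

theorem assoc_iff {J P : Ideal (Rn K n)} :
    IsAssociatedPrime P (Rn K n ⧸ J) ↔
      P.IsPrime ∧ ∃ x : Rn K n, ∀ r, r ∈ P ↔ r * x ∈ J := by
  rw [isAssociatedPrime_iff]
  constructor
  · rintro ⟨hp, x, hx⟩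
    obtain ⟨x', rfl⟩ := Ideal.Quotient.mk_surjective x
    exact ⟨hp, x', fun r => by
      rw [hx, Submodule.mem_colon_singleton, Submodule.mem_bot]; exact Ideal.Quotient.eq_zero_iff_mem⟩
  · rintro ⟨hp, x, hx⟩
    refine ⟨hp, Ideal.Quotient.mk J x, ?_⟩
    ext r
    rw [hx, Submodule.mem_colon_singleton, Submodule.mem_bot]; exact Ideal.Quotient.eq_zero_iff_mem.symm

theorem exists_X_not_mem {P : Ideal (Rn K n)} (hP : P.IsPrime) (hne : P ≠ Mi K n) :
    ∃ i, X i ∉ P := by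
  by_contra h
  push_neg at h
  have hle : Mi K n ≤ P := by
    rw [Mi, Ideal.span_le]; rintro _ ⟨i, rfl⟩; exact h i
  exact hne (Mi_isMaximal.eq_of_le hP.ne_top hle).symm

theorem AssMul_sub {J P : Ideal (Rn K n)}
    (h : IsAssociatedPrime P (Rn K n ⧸ (Mi K n * J))) :
    IsAssociatedPrime P (Rn K n ⧸ J) ∨ P = Mi K n := by
  by_cases hPM : P = Mi K n
  · exact Or.inr hPM
  left
  obtain ⟨hp, x, hx⟩ := (assoc_iff (J := Mi K n * J)).1 h
  obtain ⟨i, hi⟩ := exists_X_not_mem hp hPM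
  have hxJ : x ∉ J := by
    intro hxJ
    have hle : Mi K n ≤ P := fun r hr => (hx r).2 (Ideal.mul_mem_mul hr hxJ)
    exact hPM (Mi_isMaximal.eq_of_le hp.ne_top hle).symm
  refine assoc_iff.2 ⟨hp, x, fun r => ⟨fun hr => Ideal.mul_le_right ((hx r).1 hr), fun hrx => ?_⟩⟩
  have h1 : (X i * r) * x ∈ Mi K n * J := by
    rw [mul_assoc]
    exact Ideal.mul_mem_mul (Ideal.subset_span ⟨i, rfl⟩) hrx
  exact (hp.mem_or_mem ((hx _).2 h1)).resolve_left hi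

theorem Mi_mem_AssMul {J : Ideal (Rn K n)} {f : Rn K n} (hfJ : f ∈ J)
    (hf : f ∉ Mi K n * J) :
    IsAssociatedPrime (Mi K n) (Rn K n ⧸ (Mi K n * J)) := by
  refine assoc_iff.2 ⟨Mi_isMaximal.isPrime, f, fun r =>
    ⟨fun hr => Ideal.mul_mem_mul hr hfJ, fun hrf => ?_⟩⟩
  set A := (Mi K n * J).colon (Ideal.span {f}) with hA
  have hMiA : Mi K n ≤ A := fun r hr =>
    Ideal.mem_colon_span_singleton.2 (Ideal.mul_mem_mul hr hfJ)
  have hAne : A ≠ ⊤ := by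
    intro htop
    exact hf (by simpa using Ideal.mem_colon_span_singleton.1 (htop ▸ Submodule.mem_top :
      (1 : Rn K n) ∈ A))
  have hAeq : Mi K n = A := Mi_isMaximal.eq_of_le hAne hMiA
  rw [hAeq]
  exact Ideal.mem_colon_span_singleton.2 hrf


theorem exists_homog_order {I : Ideal (Rn K n)} (hI : IsHomog I) (hne : I ≠ ⊥) :
    ∃ f ∈ I, f ≠ 0 ∧ f.IsHomogeneous (order I) := by
  have hne' : {j | ∃ f ∈ I, f ≠ 0 ∧ f.IsHomogeneous j}.Nonempty := by
    obtain ⟨g, hgI, hg0⟩ := Submodule.exists_mem_ne_zero_of_ne_bot hne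
    have hd : ∃ d, homogeneousComponent d g ≠ 0 := by
      by_contra h
      push_neg at h
      refine hg0 ?_
      rw [← sum_homogeneousComponent g]
      exact Finset.sum_eq_zero fun d _ => h d
    obtain ⟨d, hd⟩ := hd
    exact ⟨d, homogeneousComponent d g, hI g hgI d, hd,
      homogeneousComponent_isHomogeneous d g⟩
  exact Nat.sInf_mem hne'

theorem exists_homog_ge {I : Ideal (Rn K n)} (hI : IsHomog I) (hne : I ≠ ⊥)
    (hn : 0 < n) {j : ℕ} (hj : order I ≤ j) :
    ∃ f ∈ I, f ≠ 0 ∧ f.IsHomogeneous j := by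
  obtain ⟨f, hfI, hf0, hfh⟩ := exists_homog_order hI hne
  refine ⟨X ⟨0, hn⟩ ^ (j - order I) * f, I.mul_mem_left _ hfI,
    mul_ne_zero (pow_ne_zero _ (X_ne_zero _)) hf0, ?_⟩
  have := ((isHomogeneous_X K (⟨0, hn⟩ : Fin n)).pow (j - order I)).mul hfh
  rwa [show 1 * (j - order I) + order I = j by omega] at this


/-- if `I` has minimal generators exactly in the degrees of `D`, then
`⋃_{j ≥ o(I)} Ass(R/I_⟨j⟩) = (⋃_{d ∈ D} Ass(R/I_⟨d⟩)) ∪ {M}`. -/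
theorem stmt2 (K : Type) [Field K] (n : ℕ) (hn : 0 < n)
    (I : Ideal (Rn K n)) (hI : IsHomog I) (hne : I ≠ ⊥)
    (D : Finset ℕ) (hDord : ∀ d ∈ D, order I ≤ d) (hD0 : order I ∈ D)
    (hD : ∀ j : ℕ, order I ≤ j →
      ((j + 1 ∈ D) ↔ ¬ (∀ f ∈ I, f.IsHomogeneous (j + 1) → f ∈ Mi K n * I))) :
    (⋃ j ∈ Set.Ici (order I), associatedPrimes (Rn K n) (Rn K n ⧸ comp I j)) =
      (⋃ d ∈ (D : Set ℕ), associatedPrimes (Rn K n) (Rn K n ⧸ comp I d)) ∪ {Mi K n} := by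
  have main : ∀ j, order I ≤ j →
      associatedPrimes (Rn K n) (Rn K n ⧸ comp I j) ⊆
        (⋃ d ∈ (D : Set ℕ), associatedPrimes (Rn K n) (Rn K n ⧸ comp I d)) ∪ {Mi K n} := by
    intro j hj
    induction j, hj using Nat.le_induction with
    | base =>
      intro P hP
      exact Or.inl (Set.mem_biUnion hD0 hP)
    | succ j hj ih =>
      by_cases hjD : j + 1 ∈ D
      · intro P hP
        exact Or.inl (Set.mem_biUnion hjD hP)
      · have hall : ∀ f ∈ I, f.IsHomogeneous (j + 1) → f ∈ Mi K n * I := by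
          by_contra hno
          exact hjD ((hD j hj).2 hno)
        rw [comp_succ hI hall]
        intro P hP
        rcases AssMul_sub hP with h | rfl
        · exact ih h
        · exact Or.inr rfl
  apply Set.Subset.antisymm
  · intro P hP
    simp only [Set.mem_iUnion, Set.mem_Ici, exists_prop] at hP
    obtain ⟨j, hj, hPj⟩ := hP
    exact main j hj hPj
  · intro P hP
    rcases hP with hP | hP
    · simp only [Set.mem_iUnion, exists_prop] at hP ⊢
      obtain ⟨d, hd, hPd⟩ := hP
      exact ⟨d, hDord d hd, hPd⟩
    · rw [Set.mem_singleton_iff] at hP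
      subst hP
      have hmax : order I ≤ D.max' ⟨order I, hD0⟩ := hDord _ (D.max'_mem ⟨order I, hD0⟩)
      set m := D.max' ⟨order I, hD0⟩ with hm
      have hmD : m + 1 ∉ D := fun hmem => by
        have := D.le_max' _ hmem
        omega
      have hall : ∀ f ∈ I, f.IsHomogeneous (m + 1) → f ∈ Mi K n * I := by
        by_contra hno
        exact hmD ((hD m hmax).2 hno)
      obtain ⟨f, hfI, hf0, hfh⟩ := exists_homog_ge hI hne hn hmax
      have hf1 : f ∈ comp I m := Ideal.subset_span ⟨hfI, hfh⟩
      have hf2 : f ∉ Mi K n * comp I m := M1b hfh hf0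
      have hMi : IsAssociatedPrime (Mi K n) (Rn K n ⧸ comp I (m + 1)) := by
        rw [comp_succ hI hall]
        exact Mi_mem_AssMul hf1 hf2
      simp only [Set.mem_iUnion, Set.mem_Ici, exists_prop]
      exact ⟨m + 1, by omega, hMi⟩

end
end

section
/- Every contracted homogeneous ideal of R = K[x_1,...,x_n] is M-full: there exists a nonzero linear form ℓ with IM : ℓ = I. -/
open MvPolynomial

noncomputable section

variable {K : Type} [Field K] {n : ℕ}

/-- every contracted ideal is `M`-full. -/
theorem stmt6 (K : Type) [Field K] (n : ℕ) (I : Ideal (Rn K n)) (hI : IsHomog I)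
    (hc : IsContracted I) : IsMFull I := by
  obtain ⟨ℓ, hℓ0, hℓ1, hIc⟩ := hc
  refine ⟨ℓ, hℓ0, hℓ1, ?_⟩
  have hℓM : ℓ ∈ Mi K n := by
    rw [Mi, ← Set.image_univ, MvPolynomial.mem_ideal_span_X_image]
    intro m hm
    have hdeg := hℓ1 (MvPolynomial.mem_support_iff.mp hm)
    by_contra h
    push_neg at h
    have hm0 : m = 0 := by
      ext i
      simpa using h i (Set.mem_univ i)
    rw [hm0] at hdeg
    simp at hdeg
  apply le_antisymm
  · intro f hf
    rw [Ideal.mem_colon_span_singleton] at hf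
    set A := Localization.Away ℓ
    set S := quadExt ℓ with hS
    set ψ := algebraMap (Rn K n) A with hψ
    set φ := algebraMap (Rn K n) S with hφ
    have hunit : IsUnit (ψ ℓ) :=
      IsLocalization.map_units A (⟨ℓ, Submonoid.mem_powers ℓ⟩ : Submonoid.powers ℓ)
    obtain ⟨u, hu⟩ := hunit
    have key : ∀ g ∈ I * Mi K n, ∃ s : S, (s : A) * ψ ℓ = ψ g ∧
        s ∈ Ideal.map φ I := by
      intro g hg
      refine Submodule.mul_induction_on hg ?_ ?_
      · intro a ha m hm
        have hx : ((ψ m) * ↑u⁻¹) * ψ ℓ = ψ m := by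
          rw [mul_assoc, ← hu]
          simp
        have hxS : ((ψ m) * ↑u⁻¹) ∈ S := by
          apply Algebra.subset_adjoin
          exact ⟨m, hm, hx⟩
        refine ⟨φ a * ⟨_, hxS⟩, ?_,
          Ideal.mul_mem_right _ _ (Ideal.mem_map_of_mem _ ha)⟩
        have hcoe : ((φ a : S) : A) = ψ a := rfl
        push_cast
        rw [hcoe, mul_assoc, hx, ← map_mul]
      · rintro x y ⟨s, hs1, hs2⟩ ⟨t, ht1, ht2⟩
        refine ⟨s + t, ?_, Ideal.add_mem _ hs2 ht2⟩
        push_cast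
        rw [add_mul, hs1, ht1, ← map_add]
    obtain ⟨s, hs1, hs2⟩ := key _ hf
    have hsf : (s : A) = ψ f := by
      have h1 : (s : A) * ↑u = ψ f * ↑u := by
        rw [hu, hs1, map_mul]
      calc (s : A) = (s : A) * ↑u * ↑u⁻¹ := by simp
        _ = ψ f * ↑u * ↑u⁻¹ := by rw [h1]
        _ = ψ f := by simp
    have : φ f ∈ Ideal.map φ I := by
      have : φ f = s := by
        apply Subtype.ext
        exact hsf.symm
      rw [this]
      exact hs2
    have hmem : f ∈ contraction I ℓ := this
    rwa [← hIc] at hmem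
  · intro f hf
    rw [Ideal.mem_colon_span_singleton]
    exact Ideal.mul_mem_mul hf hℓM

end
end

section
/- Let I and J be homogeneous ideals of R = K[x_1,...,x_n] with I M-full, I ⊆ J, and I_t = J_t for all t sufficiently large. Then the minimal number of generators satisfies μ(I) ≥ μ(J). -/
open MvPolynomial

noncomputable section

variable {K : Type} [Field K] {n : ℕ}

set_option maxHeartbeats 1000000 in
section
namespace Stmt9Aux

set_option maxHeartbeats 1000000
set_option synthInstance.maxHeartbeats 200000

open Module Submodule Finset

/-- The degree-`d` piece of an ideal, as a `K`-subspace of `R`. -/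
def pc (A : Ideal (Rn K n)) (d : ℕ) : Submodule K (Rn K n) :=
  Submodule.restrictScalars K A ⊓ homogeneousSubmodule (Fin n) K d

lemma mem_pc {A : Ideal (Rn K n)} {d : ℕ} {f : Rn K n} :
    f ∈ pc A d ↔ f ∈ A ∧ f.IsHomogeneous d := Iff.rfl

instance fdHS (d : ℕ) : FiniteDimensional K (homogeneousSubmodule (Fin n) K d) := by
  have h : homogeneousSubmodule (Fin n) K d ≤ restrictTotalDegree (Fin n) K d := by
    intro p hp
    rw [MvPolynomial.mem_restrictTotalDegree]
    exact ((mem_homogeneousSubmodule d p).mp hp).totalDegree_le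
  exact Submodule.finiteDimensional_of_le h

instance fdPC (A : Ideal (Rn K n)) (d : ℕ) : FiniteDimensional K (pc A d) :=
  Submodule.finiteDimensional_of_le inf_le_right

/-- The dimension of the degree-`d` piece. -/
def pd (A : Ideal (Rn K n)) (d : ℕ) : ℕ := finrank K (pc A d)

lemma pc_mono {A B : Ideal (Rn K n)} (h : A ≤ B) (d : ℕ) : pc A d ≤ pc B d :=
  fun _ hx => ⟨h hx.1, hx.2⟩

lemma pd_mono {A B : Ideal (Rn K n)} (h : A ≤ B) (d : ℕ) : pd A d ≤ pd B d :=
  Submodule.finrank_mono (pc_mono h d)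

lemma constantCoeff_eq_zero_of_mem_Mi {f : Rn K n} (hf : f ∈ Mi K n) :
    constantCoeff f = 0 := by
  have h : Mi K n ≤ RingHom.ker (constantCoeff : Rn K n →+* K) := by
    rw [Mi, Ideal.span_le]
    rintro _ ⟨i, rfl⟩
    simp [RingHom.mem_ker]
  simpa [RingHom.mem_ker] using h hf

lemma mem_Mi_of_constantCoeff_eq_zero {f : Rn K n} (hf : constantCoeff f = 0) :
    f ∈ Mi K n := by
  classical
  have hsum : (∑ v ∈ f.support, monomial v (coeff v f)) ∈ Mi K n := by
    refine Ideal.sum_mem _ fun v hv => ?_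
    have hv0 : v ≠ 0 := by
      rintro rfl
      rw [MvPolynomial.constantCoeff_eq] at hf
      exact (MvPolynomial.mem_support_iff.mp hv) hf
    obtain ⟨i, hi⟩ : ∃ i, v i ≠ 0 := by
      by_contra h; push_neg at h; exact hv0 (Finsupp.ext fun i => h i)
    have hle : Finsupp.single i 1 ≤ v := by
      rw [Finsupp.single_le_iff]; omega
    have hXl : X (R := K) i = monomial (Finsupp.single i 1) (1 : K) := rfl
    have key : monomial v (coeff v f)
        = monomial (v - Finsupp.single i 1) (coeff v f) * X i := by
      rw [hXl, monomial_mul, mul_one, tsub_add_cancel_of_le hle]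
    rw [key]
    exact Ideal.mul_mem_left _ _ (Ideal.subset_span ⟨i, rfl⟩)
  rwa [← MvPolynomial.as_sum f] at hsum

lemma mem_Mi_of_isHomogeneous {f : Rn K n} {d : ℕ} (hd : d ≠ 0)
    (hf : f.IsHomogeneous d) : f ∈ Mi K n := by
  apply mem_Mi_of_constantCoeff_eq_zero
  rw [MvPolynomial.constantCoeff_eq]
  exact hf.coeff_eq_zero (by simpa using Ne.symm hd)

lemma isHomog_Mi : IsHomog (Mi K n) := by
  intro f hf j
  rcases Nat.eq_zero_or_pos j with rfl | hj
  · rw [homogeneousComponent_zero]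
    have h0 := constantCoeff_eq_zero_of_mem_Mi hf
    rw [MvPolynomial.constantCoeff_eq] at h0
    rw [h0, map_zero]
    exact zero_mem _
  · exact mem_Mi_of_isHomogeneous (by omega) (homogeneousComponent_isHomogeneous j f)

lemma comp_mul_homog (c : Rn K n) {g : Rn K n} {e : ℕ} (hg : g.IsHomogeneous e) (d : ℕ) :
    homogeneousComponent d (c * g) =
      if e ≤ d then homogeneousComponent (d - e) c * g else 0 := by
  conv_lhs => rw [← MvPolynomial.sum_homogeneousComponent c, Finset.sum_mul, map_sum]
  have hterm : ∀ u : ℕ, homogeneousComponent d (homogeneousComponent u c * g)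
      = if d = u + e then homogeneousComponent u c * g else 0 := fun u =>
    homogeneousComponent_of_mem
      ((mem_homogeneousSubmodule _ _).mpr ((homogeneousComponent_isHomogeneous u c).mul hg))
  simp only [hterm]
  rcases le_or_gt e d with h | h
  · rw [if_pos h, Finset.sum_eq_single (d - e)]
    · rw [if_pos (by omega)]
    · intro b _ hb; rw [if_neg (by omega)]
    · intro hmem
      rw [Finset.mem_range, not_lt] at hmem
      have hz : homogeneousComponent (d - e) c = 0 :=
        homogeneousComponent_eq_zero _ _ (by omega)
      rw [if_pos (by omega), hz, zero_mul]
  · rw [if_neg (by omega)]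
    exact Finset.sum_eq_zero fun b _ => if_neg (by omega)

lemma isHomog_mul {A B : Ideal (Rn K n)} (hA : IsHomog A) (hB : IsHomog B) :
    IsHomog (A * B) := by
  intro f hf d
  refine Submodule.mul_induction_on hf (fun a ha b hb => ?_)
    (fun x y hx hy => by rw [map_add]; exact add_mem hx hy)
  have hexp : homogeneousComponent d (a * b)
      = ∑ v ∈ Finset.range (b.totalDegree + 1),
          homogeneousComponent d (a * homogeneousComponent v b) := by
    conv_lhs => rw [← MvPolynomial.sum_homogeneousComponent b, Finset.mul_sum, map_sum]
  rw [hexp]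
  refine Submodule.sum_mem _ fun v _ => ?_
  rw [comp_mul_homog a (homogeneousComponent_isHomogeneous v b) d]
  split
  · exact Ideal.mul_mem_mul (hA a ha _) (hB b hb v)
  · exact zero_mem _

lemma comp_mem_span_lower {A : Ideal (Rn K n)} (hA : IsHomog A) {f : Rn K n}
    (hf : f ∈ Mi K n * A) (d : ℕ) :
    homogeneousComponent d f ∈
      Ideal.span {g : Rn K n | g ∈ A ∧ ∃ e, e < d ∧ g.IsHomogeneous e} := by
  classical
  refine Submodule.mul_induction_on hf (fun m hm a ha => ?_)
    (fun x y hx hy => by rw [map_add]; exact add_mem hx hy)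
  rw [Mi, Ideal.span, Finsupp.mem_span_range_iff_exists_finsupp] at hm
  obtain ⟨cf, hcf⟩ := hm
  have hma : m * a = cf.sum fun i p => (p * a) * X i := by
    rw [← hcf, Finsupp.sum, Finsupp.sum, Finset.sum_mul]
    exact Finset.sum_congr rfl fun i _ => by rw [smul_eq_mul]; ring
  rw [hma, Finsupp.sum, map_sum]
  refine Submodule.sum_mem _ fun i _ => ?_
  rw [comp_mul_homog _ (isHomogeneous_X K i) d]
  split
  · refine Ideal.mul_mem_right _ _ (Ideal.subset_span ?_)
    refine ⟨hA _ (Ideal.mul_mem_left _ _ ha) _, d - 1, by omega,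
      homogeneousComponent_isHomogeneous _ _⟩
  · exact zero_mem _

lemma exists_homog_gens (J : Ideal (Rn K n)) (hJ : IsHomog J) :
    ∃ (s : Finset (Rn K n)) (T : ℕ),
      (∀ g ∈ s, g ∈ J ∧ ∃ e, e < T ∧ g.IsHomogeneous e) ∧ Ideal.span ↑s = J := by
  classical
  obtain ⟨s₀, hs₀⟩ := IsNoetherian.noetherian J
  refine ⟨s₀.biUnion fun f => (Finset.range (f.totalDegree + 1)).image
      fun e => homogeneousComponent e f, (s₀.sup fun f => f.totalDegree) + 1, ?_, ?_⟩
  · intro g hg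
    simp only [Finset.mem_biUnion, Finset.mem_image, Finset.mem_range] at hg
    obtain ⟨f, hf, e, he, rfl⟩ := hg
    have hfJ : f ∈ J := by rw [← hs₀]; exact Ideal.subset_span hf
    have hsup : f.totalDegree ≤ s₀.sup fun f => f.totalDegree := Finset.le_sup hf
    exact ⟨hJ f hfJ e, e, by omega, homogeneousComponent_isHomogeneous e f⟩
  · apply le_antisymm
    · rw [Ideal.span_le]
      intro g hg
      simp only [Finset.coe_biUnion, Set.mem_iUnion, Finset.coe_image, Set.mem_image,
        Finset.mem_coe, Finset.mem_image, Finset.mem_range] at hg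
      obtain ⟨f, hf, e, _, rfl⟩ := hg
      have hfJ : f ∈ J := by rw [← hs₀]; exact Ideal.subset_span hf
      exact hJ f hfJ e
    · rw [← hs₀, Submodule.span_le]
      intro f hf
      have : f = ∑ e ∈ Finset.range (f.totalDegree + 1), homogeneousComponent e f :=
        (MvPolynomial.sum_homogeneousComponent f).symm
      rw [SetLike.mem_coe, this]
      refine Submodule.sum_mem _ fun e he => Ideal.subset_span ?_
      simp only [Finset.coe_biUnion, Set.mem_iUnion, Finset.coe_image, Set.mem_image,
        Finset.mem_coe, Finset.mem_range]
      exact ⟨f, hf, e, Finset.mem_range.mp he, rfl⟩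

lemma high_mem_mul {J : Ideal (Rn K n)} {s : Finset (Rn K n)} {T : ℕ}
    (hgen : ∀ g ∈ s, g ∈ J ∧ ∃ e, e < T ∧ g.IsHomogeneous e)
    (hspan : Ideal.span (↑s : Set (Rn K n)) = J)
    {d : ℕ} (hd : T ≤ d) {f : Rn K n} (hfJ : f ∈ J) (hfh : f.IsHomogeneous d) :
    f ∈ Mi K n * J := by
  classical
  have hmem : f ∈ Submodule.span (Rn K n) (↑s : Set (Rn K n)) := by
    rw [← Ideal.span, hspan]; exact hfJ
  rw [mem_span_finset] at hmem
  obtain ⟨cf, -, hcf⟩ := hmem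
  have hf2 : f = ∑ g ∈ s, homogeneousComponent d (cf g * g) := by
    have h1 : homogeneousComponent d f = f := by
      rw [homogeneousComponent_of_mem ((mem_homogeneousSubmodule _ _).mpr hfh), if_pos rfl]
    conv_lhs => rw [← h1, ← hcf]
    rw [map_sum]
    exact Finset.sum_congr rfl fun g _ => by rw [smul_eq_mul]
  rw [hf2]
  refine Submodule.sum_mem _ fun g hg => ?_
  obtain ⟨hgJ, e, heT, hge⟩ := hgen g hg
  rw [comp_mul_homog _ hge d]
  split
  · exact Ideal.mul_mem_mul
      (mem_Mi_of_isHomogeneous (by omega) (homogeneousComponent_isHomogeneous _ _)) hgJ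
  · exact zero_mem _

lemma exists_spanning_finset (W : Submodule K (Rn K n)) [FiniteDimensional K W] :
    ∃ t : Finset (Rn K n), (↑t : Set (Rn K n)) ⊆ (W : Set (Rn K n)) ∧
      t.card = finrank K W ∧ Submodule.span K (↑t : Set (Rn K n)) = W := by
  classical
  let b := Module.finBasis K W
  have hinj : Function.Injective fun i => ((b i : W) : Rn K n) :=
    fun i j hij => b.injective (Subtype.ext hij)
  refine ⟨Finset.univ.image fun i => ((b i : W) : Rn K n), ?_, ?_, ?_⟩
  · intro x hx
    simp only [Finset.coe_image, Set.mem_image, Finset.mem_coe] at hx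
    obtain ⟨i, _, rfl⟩ := hx
    exact (b i).2
  · rw [Finset.card_image_of_injective _ hinj, Finset.card_univ, Fintype.card_fin]
  · have : (↑(Finset.univ.image fun i => ((b i : W) : Rn K n)) : Set (Rn K n))
        = W.subtype '' Set.range b := by
      simp only [Finset.coe_image, Finset.coe_univ, Set.image_univ]
      rw [← Set.range_comp]; rfl
    rw [this, ← Submodule.map_span, b.span_eq, Submodule.map_top, Submodule.range_subtype]

lemma exists_complement_finset {N V : Submodule K (Rn K n)} [FiniteDimensional K V]
    (hNV : N ≤ V) :
    ∃ t : Finset (Rn K n), t.card + finrank K N = finrank K V ∧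
      V ≤ N ⊔ Submodule.span K (↑t : Set (Rn K n)) ∧
      Submodule.span K (↑t : Set (Rn K n)) ≤ V := by
  classical
  obtain ⟨C', hC'⟩ := Submodule.exists_isCompl (Submodule.comap V.subtype N)
  have hfr : finrank K (Submodule.comap V.subtype N) + finrank K C' = finrank K V :=
    Submodule.finrank_add_eq_of_isCompl hC'
  have e1 : finrank K (Submodule.comap V.subtype N) = finrank K N :=
    (Submodule.comapSubtypeEquivOfLe hNV).finrank_eq
  haveI : FiniteDimensional K (C'.map V.subtype) := inferInstance
  obtain ⟨t, hts, htc, htspan⟩ := exists_spanning_finset (C'.map V.subtype)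
  have e2 : finrank K (C'.map V.subtype) = finrank K C' :=
    (Submodule.equivMapOfInjective V.subtype (Submodule.injective_subtype V) C').finrank_eq.symm
  refine ⟨t, by omega, ?_, ?_⟩
  · have hsup : N ⊔ C'.map V.subtype = V := by
      have h1 : Submodule.map V.subtype (Submodule.comap V.subtype N) = N := by
        rw [Submodule.map_comap_subtype, inf_eq_right.mpr hNV]
      rw [← h1, ← Submodule.map_sup, hC'.codisjoint.eq_top, Submodule.map_top,
        Submodule.range_subtype]
    rw [htspan, hsup]
  · rw [htspan]
    exact Submodule.map_subtype_le V C'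

lemma F2 {J : Ideal (Rn K n)} (hJ : IsHomog J) {s : Finset (Rn K n)} {T : ℕ}
    (hgen : ∀ g ∈ s, g ∈ J ∧ ∃ e, e < T ∧ g.IsHomogeneous e)
    (hspan : Ideal.span (↑s : Set (Rn K n)) = J) :
    mu J + ∑ d ∈ Finset.range T, pd (Mi K n * J) d ≤ ∑ d ∈ Finset.range T, pd J d := by
  classical
  have hNV : ∀ d, pc (Mi K n * J) d ≤ pc J d := fun d => pc_mono Ideal.mul_le_right d
  choose t htc htle htsub using fun d : ℕ => exists_complement_finset (hNV d)
  set S : Finset (Rn K n) := (Finset.range T).biUnion t with hS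
  have hkey : ∀ d, ∀ f ∈ pc J d, f ∈ Ideal.span (↑S : Set (Rn K n)) := by
    intro d
    induction d using Nat.strong_induction_on with
    | _ d IH =>
      have step : ∀ g ∈ pc (Mi K n * J) d, g ∈ Ideal.span (↑S : Set (Rn K n)) := by
        intro g hg
        have h1 : homogeneousComponent d g = g := by
          rw [homogeneousComponent_of_mem hg.2, if_pos rfl]
        have h2 := comp_mem_span_lower hJ hg.1 d
        rw [h1] at h2
        refine Ideal.span_le.mpr ?_ h2
        rintro x ⟨hxJ, e, hed, hxe⟩
        exact IH e hed x ⟨hxJ, hxe⟩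
      intro f hf
      rcases lt_or_ge d T with hdT | hdT
      · obtain ⟨u, hu, v, hv, rfl⟩ := Submodule.mem_sup.mp ((htle d) hf)
        refine add_mem (step u hu) ?_
        have hsubS : Submodule.span K (↑(t d) : Set (Rn K n))
            ≤ Submodule.restrictScalars K (Ideal.span (↑S : Set (Rn K n))) := by
          rw [Submodule.span_le]
          intro x hx
          exact Ideal.subset_span (by
            simp only [hS, Finset.coe_biUnion, Set.mem_iUnion, Finset.mem_coe,
              Finset.mem_range]
            exact ⟨d, hdT, hx⟩)
        exact hsubS hv
      · exact step f ⟨high_mem_mul hgen hspan hdT hf.1 hf.2, hf.2⟩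
  have hspanS : Ideal.span (↑S : Set (Rn K n)) = J := by
    apply le_antisymm
    · rw [Ideal.span_le]
      intro g hg
      simp only [hS, Finset.coe_biUnion, Set.mem_iUnion, Finset.mem_coe,
        Finset.mem_range] at hg
      obtain ⟨d, _, hgd⟩ := hg
      have : g ∈ pc J d := (htsub d) (Submodule.subset_span hgd)
      exact this.1
    · intro f hf
      have hsum : f = ∑ e ∈ Finset.range (f.totalDegree + 1), homogeneousComponent e f :=
        (MvPolynomial.sum_homogeneousComponent f).symm
      rw [hsum]
      exact Submodule.sum_mem _ fun e _ =>
        hkey e _ ⟨hJ f hf e, homogeneousComponent_isHomogeneous e f⟩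
  have hmu : mu J ≤ S.card := Nat.sInf_le ⟨S, rfl, hspanS⟩
  have hcard : S.card ≤ ∑ d ∈ Finset.range T, (t d).card := Finset.card_biUnion_le
  have hsum : ∑ d ∈ Finset.range T, ((t d).card + pd (Mi K n * J) d)
      = ∑ d ∈ Finset.range T, pd J d :=
    Finset.sum_congr rfl fun d _ => htc d
  rw [Finset.sum_add_distrib] at hsum
  omega

lemma F1 {I : Ideal (Rn K n)} (hI : IsHomog I) (T : ℕ) :
    ∑ d ∈ Finset.range T, pd I d ≤ mu I + ∑ d ∈ Finset.range T, pd (Mi K n * I) d := by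
  classical
  obtain ⟨s, hcard, hspan⟩ : ∃ s : Finset (Rn K n), s.card = mu I ∧
      Ideal.span (↑s : Set (Rn K n)) = I := by
    have hne : {k | ∃ s : Finset (Rn K n), s.card = k ∧
        Ideal.span (↑s : Set (Rn K n)) = I}.Nonempty := by
      obtain ⟨s₀, hs₀⟩ := IsNoetherian.noetherian I
      exact ⟨s₀.card, s₀, rfl, hs₀⟩
    obtain ⟨se, h1, h2⟩ := Nat.sInf_mem hne
    exact ⟨se, h1, h2⟩
  set MI : Ideal (Rn K n) := Mi K n * I with hMI
  let q : Rn K n →ₗ[K] (Rn K n ⧸ (MI : Submodule (Rn K n) (Rn K n))) :=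
    (Submodule.mkQ (MI : Submodule (Rn K n) (Rn K n))).restrictScalars K
  have hq0 : ∀ x : Rn K n, q x = 0 ↔ x ∈ MI := by
    intro x
    simp only [q, LinearMap.restrictScalars_apply, Submodule.mkQ_apply,
      Submodule.Quotient.mk_eq_zero]
  let U : ℕ → Submodule K (Rn K n ⧸ (MI : Submodule (Rn K n) (Rn K n))) :=
    fun d => (pc I d).map q
  haveI : ∀ d, FiniteDimensional K (U d) := fun d => inferInstance
  have hU : ∀ d, finrank K (U d) + pd MI d = pd I d := by
    intro d
    have h1 := LinearMap.finrank_range_add_finrank_ker (q.comp (pc I d).subtype)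
    have h2 : LinearMap.range (q.comp (pc I d).subtype) = U d := by
      rw [LinearMap.range_comp, Submodule.range_subtype]
    have h3 : LinearMap.ker (q.comp (pc I d).subtype)
        = Submodule.comap (pc I d).subtype (pc MI d) := by
      ext x
      simp only [LinearMap.mem_ker, LinearMap.comp_apply, Submodule.mem_comap]
      rw [hq0]
      exact ⟨fun h => ⟨h, x.2.2⟩, fun h => h.1⟩
    have hMIle : MI ≤ I := by rw [hMI]; exact Ideal.mul_le_right
    have h4 : finrank K (Submodule.comap (pc I d).subtype (pc MI d))
        = finrank K (pc MI d) :=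
      (Submodule.comapSubtypeEquivOfLe (pc_mono hMIle d)).finrank_eq
    rw [h2, h3, h4] at h1
    exact h1
  have hfd : ∀ T : ℕ, FiniteDimensional K (↥(⨆ d ∈ Finset.range T, U d)) := by
    intro T
    induction T with
    | zero =>
      rw [Finset.range_zero]
      rw [show (⨆ d ∈ (∅ : Finset ℕ), U d) = ⊥ by simp]
      infer_instance
    | succ T IH =>
      rw [Finset.range_add_one, Finset.iSup_insert]
      haveI := IH
      exact Submodule.finiteDimensional_sup _ _
  have hsup : ∀ T : ℕ, finrank K (↥(⨆ d ∈ Finset.range T, U d))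
      = ∑ d ∈ Finset.range T, finrank K (U d) := by
    intro T
    induction T with
    | zero =>
      rw [Finset.range_zero]
      rw [show (⨆ d ∈ (∅ : Finset ℕ), U d) = ⊥ by simp]
      simp
    | succ T IH =>
      haveI := hfd T
      have hins : (⨆ d ∈ Finset.range (T + 1), U d)
          = U T ⊔ ⨆ d ∈ Finset.range T, U d := by
        rw [Finset.range_add_one, Finset.iSup_insert]
      have hdisj : Disjoint (U T) (⨆ d ∈ Finset.range T, U d) := by
        rw [Submodule.disjoint_def]
        intro x hx2 hx1
        obtain ⟨f, hf, rfl⟩ := hx2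
        have hmap : (⨆ d ∈ Finset.range T, U d)
            = Submodule.map q (⨆ d ∈ Finset.range T, pc I d) := by
          simp only [U, Submodule.map_iSup]
        rw [hmap] at hx1
        obtain ⟨g, hg, hgf⟩ := hx1
        have hfg : f - g ∈ MI := by
          have : q (f - g) = 0 := by rw [map_sub, hgf, sub_self]
          rwa [hq0] at this
        have hgT : homogeneousComponent T g = 0 := by
          have hker : (⨆ d ∈ Finset.range T, pc I d)
              ≤ LinearMap.ker (homogeneousComponent (σ := Fin n) (R := K) T) := by
            refine iSup₂_le fun d hd => fun x hx => ?_
            rw [LinearMap.mem_ker, homogeneousComponent_of_mem hx.2,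
              if_neg (by rw [Finset.mem_range] at hd; omega)]
          exact hker hg
        have hfT : homogeneousComponent T f = f := by
          rw [homogeneousComponent_of_mem hf.2, if_pos rfl]
        have hfg' : f - g ∈ Mi K n * I := by rwa [hMI] at hfg
        have hfMI : f ∈ Mi K n * I := by
          have h := isHomog_mul isHomog_Mi hI _ hfg' T
          rwa [map_sub, hgT, sub_zero, hfT] at h
        exact (hq0 f).mpr (by rwa [hMI])
      have hTnot : T ∉ Finset.range T := by simp
      rw [hins, Finset.range_add_one, Finset.sum_insert hTnot, ← IH]
      have hfr := Submodule.finrank_sup_add_finrank_inf_eq (U T) (⨆ d ∈ Finset.range T, U d)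
      rw [hdisj.eq_bot, finrank_bot, add_zero] at hfr
      exact hfr
  have himg : (⨆ d ∈ Finset.range T, U d)
      ≤ Submodule.span K (↑(s.image q) : Set (Rn K n ⧸ (MI : Submodule (Rn K n) (Rn K n)))) := by
    refine iSup₂_le fun d _ => ?_
    rintro x ⟨f, hf, rfl⟩
    have hfs : f ∈ Submodule.span (Rn K n) (↑s : Set (Rn K n)) := by
      rw [← Ideal.span, hspan]; exact hf.1
    rw [mem_span_finset] at hfs
    obtain ⟨c, -, hc⟩ := hfs
    rw [← hc, map_sum]
    refine Submodule.sum_mem _ fun g hg => ?_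
    have hsplit : q (c g • g) = constantCoeff (c g) • q g := by
      have hdec : c g • g = constantCoeff (c g) • g + (c g - C (constantCoeff (c g))) * g := by
        rw [smul_eq_mul, MvPolynomial.smul_eq_C_mul]; ring
      have hm : (c g - C (constantCoeff (c g))) * g ∈ MI := by
        refine Ideal.mul_mem_mul (mem_Mi_of_constantCoeff_eq_zero ?_) ?_
        · rw [map_sub, MvPolynomial.constantCoeff_C, sub_self]
        · rw [← hspan]; exact Ideal.subset_span hg
      rw [hdec, map_add, map_smul]
      have : q ((c g - C (constantCoeff (c g))) * g) = 0 := by rw [hq0]; exact hm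
      rw [this, add_zero]
    rw [hsplit]
    exact Submodule.smul_mem _ _ (Submodule.subset_span (by
      simp only [Finset.coe_image, Set.mem_image, Finset.mem_coe]
      exact ⟨g, hg, rfl⟩))
  have hfinal : finrank K (↥(⨆ d ∈ Finset.range T, U d)) ≤ mu I := by
    calc finrank K (↥(⨆ d ∈ Finset.range T, U d))
        ≤ finrank K (Submodule.span K
            (↑(s.image q) : Set (Rn K n ⧸ (MI : Submodule (Rn K n) (Rn K n))))) :=
          Submodule.finrank_mono himg
      _ ≤ (s.image q).card := finrank_span_finset_le_card _
      _ ≤ s.card := Finset.card_image_le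
      _ = mu I := hcard
  have hfin : ∑ d ∈ Finset.range T, pd I d
      = ∑ d ∈ Finset.range T, finrank K (U d) + ∑ d ∈ Finset.range T, pd MI d := by
    rw [← Finset.sum_add_distrib]
    exact Finset.sum_congr rfl fun d _ => (hU d).symm
  rw [hfin, ← hsup T]
  omega

lemma F3 {I J : Ideal (Rn K n)} (hle : I ≤ J) {l : Rn K n} (hl0 : l ≠ 0)
    (hl1 : l.IsHomogeneous 1) (hfull : (I * Mi K n).colon (Ideal.span {l}) = I) (d : ℕ) :
    pd J d + pd (Mi K n * I) (d + 1) ≤ pd I d + pd (Mi K n * J) (d + 1) := by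
  classical
  have hlM : l ∈ Mi K n := mem_Mi_of_isHomogeneous one_ne_zero hl1
  set φ : Rn K n →ₗ[K] Rn K n := LinearMap.mulLeft K l with hφ
  have hinj : Function.Injective φ := fun a b hab => by
    simp only [hφ, LinearMap.mulLeft_apply] at hab
    exact mul_left_cancel₀ hl0 hab
  set W := (pc J d).map φ with hW
  have hWd : finrank K W = pd J d :=
    ((pc J d).equivMapOfInjective φ hinj).finrank_eq.symm
  have hmul : ∀ f : Rn K n, f.IsHomogeneous d → (l * f).IsHomogeneous (d + 1) := by
    intro f hfh
    have := hl1.mul hfh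
    rwa [add_comm] at this
  have hWle : W ≤ pc (Mi K n * J) (d + 1) := by
    rintro x ⟨f, hf, rfl⟩
    exact ⟨Ideal.mul_mem_mul hlM hf.1, hmul f hf.2⟩
  have hWinf : W ⊓ pc (Mi K n * I) (d + 1) = (pc I d).map φ := by
    ext x; constructor
    · rintro ⟨⟨f, hf, rfl⟩, hx2⟩
      refine ⟨f, ⟨?_, hf.2⟩, rfl⟩
      have hcol : f ∈ (I * Mi K n).colon (Ideal.span {l}) := by
        rw [Ideal.mem_colon_span_singleton, mul_comm I (Mi K n)]
        have : (l * f : Rn K n) ∈ Mi K n * I := hx2.1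
        rwa [mul_comm f l]
      rwa [hfull] at hcol
    · rintro ⟨f, hf, rfl⟩
      exact ⟨⟨f, ⟨hle hf.1, hf.2⟩, rfl⟩,
        ⟨Ideal.mul_mem_mul hlM hf.1, hmul f hf.2⟩⟩
  have hIeq : finrank K ((pc I d).map φ) = pd I d :=
    ((pc I d).equivMapOfInjective φ hinj).finrank_eq.symm
  have hsum := Submodule.finrank_sup_add_finrank_inf_eq W (pc (Mi K n * I) (d + 1))
  have hsuple : finrank K (↥(W ⊔ pc (Mi K n * I) (d + 1))) ≤ pd (Mi K n * J) (d + 1) :=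
    Submodule.finrank_mono (sup_le hWle (pc_mono (Ideal.mul_mono_right hle) _))
  rw [hWinf, hIeq, hWd] at hsum
  unfold pd at *
  omega

end Stmt9Aux
end

set_option maxHeartbeats 1000000 in
/-- if `I` is `M`-full, `I ⊆ J` and `I_t = J_t` for `t ≫ 0`,
then `μ(I) ≥ μ(J)`. -/
theorem stmt9 (K : Type) [Field K] (n : ℕ) (I J : Ideal (Rn K n))
    (hI : IsHomog I) (hJ : IsHomog J) (hfull : IsMFull I) (hle : I ≤ J)
    (heq : ∃ t0 : ℕ, ∀ t ≥ t0, ∀ f : Rn K n, f.IsHomogeneous t → (f ∈ I ↔ f ∈ J)) :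
    mu J ≤ mu I := by
  classical
  obtain ⟨t0, ht0⟩ := heq
  obtain ⟨l, hl0, hl1, hfull'⟩ := hfull
  obtain ⟨s, T₀, hgen, hspan⟩ := Stmt9Aux.exists_homog_gens J hJ
  set T1 : ℕ := max t0 T₀ with hT1
  set T : ℕ := T1 + 1 with hT
  have hgen' : ∀ g ∈ s, g ∈ J ∧ ∃ e, e < T ∧ g.IsHomogeneous e := by
    intro g hg
    obtain ⟨hgJ, e, heT, hge⟩ := hgen g hg
    exact ⟨hgJ, e, by omega, hge⟩
  have h1 := Stmt9Aux.F2 hJ hgen' hspan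
  have h2 := Stmt9Aux.F1 hI T
  have h3 : ∀ d ∈ Finset.range T1,
      Stmt9Aux.pd J d + Stmt9Aux.pd (Mi K n * I) (d + 1)
        ≤ Stmt9Aux.pd I d + Stmt9Aux.pd (Mi K n * J) (d + 1) :=
    fun d _ => Stmt9Aux.F3 hle hl0 hl1 hfull' d
  have h3s : ∑ d ∈ Finset.range T1, Stmt9Aux.pd J d
      + ∑ d ∈ Finset.range T1, Stmt9Aux.pd (Mi K n * I) (d + 1)
      ≤ ∑ d ∈ Finset.range T1, Stmt9Aux.pd I d
      + ∑ d ∈ Finset.range T1, Stmt9Aux.pd (Mi K n * J) (d + 1) := by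
    have := Finset.sum_le_sum h3
    rwa [Finset.sum_add_distrib, Finset.sum_add_distrib] at this
  have h4 : Stmt9Aux.pd J T1 = Stmt9Aux.pd I T1 := by
    have hpc : Stmt9Aux.pc I T1 = Stmt9Aux.pc J T1 := by
      ext f
      simp only [Stmt9Aux.mem_pc]
      constructor
      · rintro ⟨hfI, hfh⟩
        exact ⟨(ht0 T1 (by omega) f hfh).mp hfI, hfh⟩
      · rintro ⟨hfJ, hfh⟩
        exact ⟨(ht0 T1 (by omega) f hfh).mpr hfJ, hfh⟩
    unfold Stmt9Aux.pd
    rw [hpc]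
  have h5 : Stmt9Aux.pd (Mi K n * I) 0 ≤ Stmt9Aux.pd (Mi K n * J) 0 :=
    Stmt9Aux.pd_mono (Ideal.mul_mono_right hle) 0
  have eB : ∑ d ∈ Finset.range T, Stmt9Aux.pd J d
      = ∑ d ∈ Finset.range T1, Stmt9Aux.pd J d + Stmt9Aux.pd J T1 := by
    rw [hT, Finset.sum_range_succ]
  have eA : ∑ d ∈ Finset.range T, Stmt9Aux.pd I d
      = ∑ d ∈ Finset.range T1, Stmt9Aux.pd I d + Stmt9Aux.pd I T1 := by
    rw [hT, Finset.sum_range_succ]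
  have eBm : ∑ d ∈ Finset.range T, Stmt9Aux.pd (Mi K n * J) d
      = ∑ d ∈ Finset.range T1, Stmt9Aux.pd (Mi K n * J) (d + 1)
        + Stmt9Aux.pd (Mi K n * J) 0 := by
    rw [hT, Finset.sum_range_succ']
  have eAm : ∑ d ∈ Finset.range T, Stmt9Aux.pd (Mi K n * I) d
      = ∑ d ∈ Finset.range T1, Stmt9Aux.pd (Mi K n * I) (d + 1)
        + Stmt9Aux.pd (Mi K n * I) 0 := by
    rw [hT, Finset.sum_range_succ']
  omega

end
end

section
/- Let I be a homogeneous ideal of R = K[x_1,...,x_n] of initial degree d and ℓ a nonzero linear form with I + (ℓ) = M^d + (ℓ). Then I = I_⟨d⟩ + ℓ·(I : ℓ). -/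
open MvPolynomial

noncomputable section

variable {K : Type} [Field K] {n : ℕ}

lemma deg_single_one (i : Fin n) : Finsupp.degree (Finsupp.single i (1 : ℕ)) = 1 := by
  rw [Finsupp.degree_single]

/-- If an ideal contains `X i * g` for all homogeneous `g` of degree `e`, then it contains
all homogeneous polynomials of degree `e + 1`. -/
lemma stepD (J : Ideal (Rn K n)) (e : ℕ)
    (hJ : ∀ g : Rn K n, g.IsHomogeneous e → ∀ i : Fin n, X i * g ∈ J) :
    ∀ f : Rn K n, f.IsHomogeneous (e + 1) → f ∈ J := by
  intro f hf
  rw [← f.support_sum_monomial_coeff]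
  apply Ideal.sum_mem
  intro s hs
  have hdeg : Finsupp.degree s = e + 1 := by
    rw [Finsupp.degree_eq_weight_one]
    exact hf (mem_support_iff.mp hs)
  have hs0 : s ≠ 0 := by
    intro h0
    rw [h0, map_zero] at hdeg
    omega
  obtain ⟨i, hi⟩ : ∃ i, s i ≠ 0 := by
    by_contra hc
    push_neg at hc
    exact hs0 (Finsupp.ext fun i => hc i)
  have hle : Finsupp.single i 1 ≤ s := by
    rw [Finsupp.single_le_iff]
    omega
  have hsplit : s - Finsupp.single i 1 + Finsupp.single i 1 = s := tsub_add_cancel_of_le hle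
  have hdeg' : Finsupp.degree (s - Finsupp.single i 1) = e := by
    have h2 : Finsupp.degree (s - Finsupp.single i 1) + Finsupp.degree (Finsupp.single i (1:ℕ))
        = Finsupp.degree s := by
      simp only [Finsupp.degree_eq_weight_one]
      rw [← map_add, hsplit]
    rw [deg_single_one, hdeg] at h2
    omega
  have hmono : (monomial s (coeff s f) : Rn K n)
      = X i * monomial (s - Finsupp.single i 1) (coeff s f) := by
    rw [X, monomial_mul, one_mul, add_comm, hsplit]
  rw [hmono]
  exact hJ _ (isHomogeneous_monomial _ hdeg') i

/-- Every homogeneous polynomial of degree `e` lies in `M ^ e`. -/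
lemma homog_mem_pow : ∀ (e : ℕ) (f : Rn K n), f.IsHomogeneous e → f ∈ Mi K n ^ e := by
  intro e
  induction e with
  | zero => intro f _; simp [Ideal.one_eq_top]
  | succ e ih =>
    refine stepD _ e (fun g hg i => ?_)
    rw [pow_succ']
    exact Ideal.mul_mem_mul (Ideal.subset_span ⟨i, rfl⟩) (ih g hg)

/-- Homogeneous components of elements of `(ℓ)` stay in `(ℓ)`. -/
lemma hcomp_span (ℓ : Rn K n) (hℓ : ℓ.IsHomogeneous 1) (c : Rn K n)
    (hc : c ∈ Ideal.span {ℓ}) (m : ℕ) : homogeneousComponent m c ∈ Ideal.span {ℓ} := by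
  obtain ⟨b, rfl⟩ := Ideal.mem_span_singleton'.mp hc
  rw [show b * ℓ = ∑ j ∈ Finset.range (b.totalDegree + 1), homogeneousComponent j b * ℓ by
      rw [← Finset.sum_mul, b.sum_homogeneousComponent],
    map_sum]
  apply Ideal.sum_mem
  intro j _
  have hhom : (homogeneousComponent j b * ℓ).IsHomogeneous (j + 1) :=
    (homogeneousComponent_isHomogeneous j b).mul hℓ
  rw [homogeneousComponent_of_mem ((mem_homogeneousSubmodule _ _).mpr hhom)]
  split
  · exact Ideal.mul_mem_left _ _ (Ideal.mem_span_singleton_self ℓ)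
  · exact zero_mem _

/-- Key lemma: every homogeneous polynomial of degree `e ≥ d` lies in `I_⟨d⟩ + (ℓ)`. -/
lemma keyC (I : Ideal (Rn K n)) (hI : IsHomog I) (d : ℕ) (ℓ : Rn K n)
    (hℓ : ℓ.IsHomogeneous 1)
    (h : I + Ideal.span {ℓ} = Mi K n ^ d + Ideal.span {ℓ}) :
    ∀ e, d ≤ e → ∀ f : Rn K n, f.IsHomogeneous e → f ∈ comp I d + Ideal.span {ℓ} := by
  intro e hde
  induction e, hde using Nat.le_induction with
  | base =>
    intro f hf
    have hf' : f ∈ I + Ideal.span {ℓ} := by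
      rw [h]
      exact Submodule.mem_sup_left (homog_mem_pow d f hf)
    obtain ⟨a, ha, c, hc, heq⟩ := Submodule.mem_sup.mp hf'
    have e1 : f = homogeneousComponent d a + homogeneousComponent d c := by
      have h2 := homogeneousComponent_of_mem ((mem_homogeneousSubmodule _ _).mpr hf) (m := d)
      rw [if_pos rfl] at h2
      rw [← h2, ← heq, map_add]
    rw [e1]
    refine Submodule.add_mem _ (Submodule.mem_sup_left ?_) (Submodule.mem_sup_right ?_)
    · exact Ideal.subset_span ⟨hI a ha d, homogeneousComponent_isHomogeneous d a⟩
    · exact hcomp_span ℓ hℓ c hc d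
  | succ e hde ih =>
    exact stepD _ e (fun g hg i => Ideal.mul_mem_left _ _ (ih g hg))

/-- if `I + (ℓ) = M^d + (ℓ)` with `d = o(I)`, then
`I = I_⟨d⟩ + ℓ·(I : ℓ)`. -/
theorem stmt10 (K : Type) [Field K] (n : ℕ) (I : Ideal (Rn K n)) (hI : IsHomog I)
    (d : ℕ) (hd : order I = d) (ℓ : Rn K n) (hℓ0 : ℓ ≠ 0) (hℓ : ℓ.IsHomogeneous 1)
    (h : I + Ideal.span {ℓ} = Mi K n ^ d + Ideal.span {ℓ}) :
    I = comp I d + Ideal.span {ℓ} * I.colon (Ideal.span {ℓ}) := by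
  have hcompI : comp I d ≤ I := Ideal.span_le.mpr fun x hx => hx.1
  apply le_antisymm
  · intro f hf
    rw [← f.sum_homogeneousComponent]
    apply Ideal.sum_mem
    intro j _
    by_cases h0 : homogeneousComponent j f = 0
    · rw [h0]; exact zero_mem _
    · have hmem : homogeneousComponent j f ∈ I := hI f hf j
      have hhom := homogeneousComponent_isHomogeneous j f
      have hdj : d ≤ j := by
        rw [← hd]
        exact Nat.sInf_le ⟨_, hmem, h0, hhom⟩
      obtain ⟨g, hg, c, hc, heq⟩ :=
        Submodule.mem_sup.mp (keyC I hI d ℓ hℓ h j hdj _ hhom)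
      obtain ⟨q, hq⟩ := Ideal.mem_span_singleton'.mp hc
      have hgI : g ∈ I := hcompI hg
      have hqcol : q ∈ I.colon (Ideal.span {ℓ}) := by
        rw [Ideal.mem_colon_span_singleton]
        have hql : q * ℓ = homogeneousComponent j f - g := by rw [hq, ← heq]; ring
        rw [hql]
        exact Ideal.sub_mem _ hmem hgI
      have hrw : homogeneousComponent j f = g + ℓ * q := by rw [← heq, ← hq]; ring
      rw [hrw]
      exact Submodule.add_mem _ (Submodule.mem_sup_left hg)
        (Submodule.mem_sup_right
          (Ideal.mul_mem_mul (Ideal.mem_span_singleton_self ℓ) hqcol))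
  · apply sup_le hcompI
    rw [Ideal.mul_le]
    intro r hr s hs
    obtain ⟨a, rfl⟩ := Ideal.mem_span_singleton'.mp hr
    rw [Ideal.mem_colon_span_singleton] at hs
    have : a * ℓ * s = a * (s * ℓ) := by ring
    rw [this]
    exact Ideal.mul_mem_left _ _ hs

end
end

section
/- Let I be a homogeneous ideal of R = K[x_1,...,x_n] of initial degree d and ℓ a nonzero linear form with I + (ℓ) = M^d + (ℓ). Then dim R/I_⟨d⟩ ≤ 1, where I_⟨d⟩ is the ideal generated by the degree-d forms of I. -/
open MvPolynomial

noncomputable section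

variable {K : Type} [Field K] {n : ℕ}

section AuxStmt11

variable {K : Type} [Field K] {n : ℕ}

lemma aux_deg_add (a b : Fin n →₀ ℕ) : (a+b).degree = a.degree + b.degree := by
  simp only [Finsupp.degree_eq_weight_one, map_add]

lemma aux_deg_single (i : Fin n) (k : ℕ) : (Finsupp.single i k).degree = k := by
  simp only [Finsupp.degree_eq_weight_one, Finsupp.weight_apply, Finsupp.sum_single_index,
    smul_eq_mul, Pi.one_apply, mul_one, zero_smul]

lemma aux_hc_mul {ℓ : MvPolynomial (Fin n) K} (hℓ : ℓ.IsHomogeneous 1) (e : ℕ)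
    (b : MvPolynomial (Fin n) K) :
    homogeneousComponent (e+1) (b * ℓ) = homogeneousComponent e b * ℓ := by
  conv_lhs => rw [← sum_homogeneousComponent b, Finset.sum_mul, map_sum]
  have key : ∀ i : ℕ, homogeneousComponent (e+1) (homogeneousComponent i b * ℓ)
      = if i = e then homogeneousComponent i b * ℓ else 0 := by
    intro i
    have hh : (homogeneousComponent i b * ℓ).IsHomogeneous (i+1) :=
      (homogeneousComponent_isHomogeneous i b).mul hℓ
    rw [homogeneousComponent_of_mem ((mem_homogeneousSubmodule _ _).2 hh)]
    by_cases hi : i = e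
    · simp [hi]
    · simp only [hi, if_false, ite_eq_right_iff]
      intro hei; omega
  simp_rw [key]
  rw [Finset.sum_ite_eq' (Finset.range (b.totalDegree + 1)) e
    (fun i => homogeneousComponent i b * ℓ)]
  by_cases he : e ∈ Finset.range (b.totalDegree + 1)
  · simp [he]
  · simp only [he, if_false]
    rw [Finset.mem_range, not_lt] at he
    rw [homogeneousComponent_eq_zero (φ := b) (n := e) (by omega), zero_mul]

lemma aux_mem_pow : ∀ (k : ℕ) (m : Fin n →₀ ℕ), k ≤ m.degree →
    monomial m (1:K) ∈ Mi K n ^ k := by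
  intro k
  induction k with
  | zero => intro m _; simp
  | succ k ih =>
    intro m hm
    have hm0 : m ≠ 0 := by
      rintro rfl; simp [map_zero] at hm
    obtain ⟨i, hi⟩ : ∃ i, m i ≠ 0 := by
      by_contra hc; push_neg at hc; exact hm0 (Finsupp.ext fun i => hc i)
    have hle : Finsupp.single i 1 ≤ m := by
      intro j
      by_cases hj : j = i
      · subst hj; simpa [Finsupp.single_apply] using Nat.one_le_iff_ne_zero.2 hi
      · simp [Finsupp.single_apply, Ne.symm hj]
    have hsplit : m - Finsupp.single i 1 + Finsupp.single i 1 = m :=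
      tsub_add_cancel_of_le hle
    have hdeg : (m - Finsupp.single i 1).degree + 1 = m.degree := by
      have := aux_deg_add (m - Finsupp.single i 1) (Finsupp.single i 1)
      rw [hsplit, aux_deg_single] at this
      omega
    have h1 : monomial m (1:K) = monomial (m - Finsupp.single i 1) 1 * X i := by
      rw [X, monomial_mul, one_mul, hsplit]
    rw [h1, pow_succ]
    exact Ideal.mul_mem_mul (ih _ (by omega)) (Ideal.subset_span ⟨i, rfl⟩)

lemma aux_split : ∀ (k : ℕ) (m : Fin n →₀ ℕ), k ≤ m.degree →
    ∃ m2 : Fin n →₀ ℕ, m2 ≤ m ∧ m2.degree = k := by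
  intro k
  induction k with
  | zero => intro m _; exact ⟨0, zero_le, map_zero _⟩
  | succ k ih =>
    intro m hm
    obtain ⟨m2, hle, hdeg⟩ := ih m (by omega)
    have hne : m2 ≠ m := by rintro rfl; omega
    obtain ⟨i, hi⟩ : ∃ i, m2 i < m i := by
      by_contra hc; push_neg at hc
      exact hne (Finsupp.ext fun i => le_antisymm (hle i) (hc i))
    refine ⟨m2 + Finsupp.single i 1, ?_, ?_⟩
    · intro j
      by_cases hj : j = i
      · subst hj; simpa [Finsupp.single_apply] using hi
      · simpa [Finsupp.single_apply, Ne.symm hj] using hle j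
    · rw [aux_deg_add, aux_deg_single, hdeg]

lemma aux_dim (A : Type) [CommRing A] (φ : Polynomial K →+* A) (hφ : φ.IsIntegral) :
    ringKrullDim A ≤ 1 := by
  letI : Algebra (Polynomial K) A := φ.toAlgebra
  rw [ringKrullDim, Order.krullDim]
  refine iSup_le fun p => ?_
  suffices hlen : p.length ≤ 1 by exact_mod_cast hlen
  by_contra hlen
  push_neg at hlen
  have comap_lt : ∀ x y : PrimeSpectrum A, x < y →
      x.asIdeal.comap (algebraMap (Polynomial K) A)
        < y.asIdeal.comap (algebraMap (Polynomial K) A) := by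
    intro x y hxy
    rw [← PrimeSpectrum.asIdeal_lt_asIdeal] at hxy
    obtain ⟨z, hz1, hz0⟩ := SetLike.exists_of_lt hxy
    exact Ideal.comap_lt_comap_of_integral_mem_sdiff hxy.le ⟨hz1, hz0⟩ (hφ z)
  set i0 : Fin (p.length + 1) := ⟨0, by omega⟩
  set i1 : Fin (p.length + 1) := ⟨1, by omega⟩
  set i2 : Fin (p.length + 1) := ⟨2, by omega⟩
  have r01 := comap_lt _ _ (p.strictMono (show i0 < i1 by simp [i0, i1, Fin.lt_def]))
  have r12 := comap_lt _ _ (p.strictMono (show i1 < i2 by simp [i1, i2, Fin.lt_def]))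
  set r1 := (p i1).asIdeal.comap (algebraMap (Polynomial K) A)
  set r2 := (p i2).asIdeal.comap (algebraMap (Polynomial K) A)
  haveI : r1.IsPrime := Ideal.comap_isPrime _ _
  haveI h2 : r2.IsPrime := Ideal.comap_isPrime _ _
  have hbot : r1 ≠ ⊥ := (bot_le.trans_lt r01).ne'
  have hmax : r1.IsMaximal := IsPrime.to_maximal_ideal hbot
  exact h2.ne_top (hmax.1.2 r2 r12)

end AuxStmt11

set_option maxHeartbeats 1000000 in
set_option synthInstance.maxHeartbeats 100000 in
/-- if `I + (ℓ) = M^d + (ℓ)` with `d = o(I)`, then `dim R/I_⟨d⟩ ≤ 1`. -/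
theorem stmt11 (K : Type) [Field K] (n : ℕ) (I : Ideal (Rn K n)) (hI : IsHomog I)
    (d : ℕ) (hd : order I = d) (ℓ : Rn K n) (hℓ0 : ℓ ≠ 0) (hℓ : ℓ.IsHomogeneous 1)
    (h : I + Ideal.span {ℓ} = Mi K n ^ d + Ideal.span {ℓ}) :
    ringKrullDim (Rn K n ⧸ comp I d) ≤ 1 := by
  classical
  set J : Ideal (Rn K n) := comp I d with hJ
  have memJ : ∀ a : Rn K n, a ∈ I → homogeneousComponent d a ∈ J := by
    intro a ha
    exact Ideal.subset_span ⟨hI a ha d, homogeneousComponent_isHomogeneous d a⟩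
  rcases Nat.eq_zero_or_pos d with hd0 | hdpos
  · -- degenerate case : J = ⊤
    subst hd0
    have h1 : (1 : Rn K n) ∈ I + Ideal.span {ℓ} := by
      rw [h, pow_zero, Ideal.one_eq_top]
      exact Submodule.mem_sup_left Submodule.mem_top
    rw [Submodule.add_eq_sup] at h1
    obtain ⟨a, ha, c, hc, hac⟩ := Submodule.mem_sup.1 h1
    obtain ⟨b, rfl⟩ := Ideal.mem_span_singleton'.1 hc
    have hl0 : coeff 0 ℓ = 0 := by
      by_contra hne
      have := hℓ hne
      simp at this
    have hbl : homogeneousComponent 0 (b * ℓ) = 0 := by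
      rw [homogeneousComponent_zero, ← constantCoeff_eq, map_mul, constantCoeff_eq, hl0,
        mul_zero, map_zero]
    have h1' : homogeneousComponent 0 a = 1 := by
      have := congrArg (homogeneousComponent 0) hac
      rw [map_add, hbl, add_zero] at this
      rw [this, homogeneousComponent_zero]
      simp
    have hone : (1 : Rn K n) ∈ J := by
      rw [← h1']
      exact memJ a ha
    have hJtop : J = ⊤ := Ideal.eq_top_iff_one J |>.2 hone
    haveI : Subsingleton (Rn K n ⧸ J) := by
      rw [hJtop]
      exact Ideal.Quotient.subsingleton_iff.2 rfl
    calc ringKrullDim (Rn K n ⧸ J) = ⊥ := ringKrullDim_eq_bot_of_subsingleton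
    _ ≤ 1 := bot_le
  · obtain ⟨e, rfl⟩ : ∃ e, d = e + 1 := ⟨d - 1, by omega⟩
    set d := e + 1 with hdd
    set π : Rn K n →+* (Rn K n ⧸ J) := (Ideal.Quotient.mk J : Rn K n →+* (Rn K n ⧸ J))
      with hπdef
    -- Key step : every monomial of degree d is, modulo J, a multiple of ℓ
    have K1 : ∀ m2 : Fin n →₀ ℕ, m2.degree = d →
        ∃ b : Rn K n, b.IsHomogeneous e ∧ monomial m2 (1:K) - b * ℓ ∈ J := by
      intro m2 hm2
      have hmem : monomial m2 (1:K) ∈ Mi K n ^ d + Ideal.span {ℓ} :=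
        Submodule.mem_sup_left (aux_mem_pow d m2 (le_of_eq hm2.symm))
      rw [← h, Submodule.add_eq_sup] at hmem
      obtain ⟨a, ha, c, hc, hac⟩ := Submodule.mem_sup.1 hmem
      obtain ⟨b, rfl⟩ := Ideal.mem_span_singleton'.1 hc
      refine ⟨homogeneousComponent e b, homogeneousComponent_isHomogeneous e b, ?_⟩
      have hcomp := congrArg (homogeneousComponent d) hac
      rw [map_add, aux_hc_mul hℓ e b,
        homogeneousComponent_of_mem ((mem_homogeneousSubmodule _ _).2
          (isHomogeneous_monomial (1:K) hm2)), if_pos rfl] at hcomp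
      have heq : monomial m2 (1:K) - homogeneousComponent e b * ℓ
          = homogeneousComponent d a := by
        rw [← hcomp]; ring
      rw [heq]
      exact memJ a ha
    -- the algebra structure over K[X], X ↦ ℓ mod J
    set φ : Polynomial K →+* (Rn K n ⧸ J) := (Polynomial.aeval (π ℓ)).toRingHom with hφdef
    have hφX : φ Polynomial.X = π ℓ := by simp [hφdef]
    have hφC : ∀ c : K, φ (Polynomial.C c) = π (C c) := by
      intro c
      simp only [hφdef, AlgHom.toRingHom_eq_coe, RingHom.coe_coe, Polynomial.aeval_C]
      rfl
    letI : Algebra (Polynomial K) (Rn K n ⧸ J) := φ.toAlgebra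
    -- the finite spanning set
    have hfin : {f : Fin n →₀ ℕ | f.degree ≤ d}.Finite := Finsupp.finite_of_degree_le d
    set T : Finset (Rn K n ⧸ J) := hfin.toFinset.image (fun m => π (monomial m (1:K)))
      with hT
    have main : ∀ N : ℕ, ∀ f : Rn K n, f.totalDegree ≤ N →
        π f ∈ Submodule.span (Polynomial K) (T : Set (Rn K n ⧸ J)) := by
      intro N
      induction N using Nat.strong_induction_on with
      | _ N ih =>
        intro f hf
        rw [f.as_sum, map_sum]
        apply Submodule.sum_mem
        intro m hm
        have hdm : m.degree ≤ N := le_trans (le_totalDegree hm) hf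
        have hmono : π (monomial m (1:K)) ∈ Submodule.span (Polynomial K)
            (T : Set (Rn K n ⧸ J)) := by
          by_cases hcase : m.degree ≤ d
          · exact Submodule.subset_span
              (Finset.mem_coe.2 (Finset.mem_image.2 ⟨m, hfin.mem_toFinset.2 hcase, rfl⟩))
          · push_neg at hcase
            obtain ⟨m2, hle, hdeg⟩ := aux_split d m (by omega)
            obtain ⟨b, hbhom, hbJ⟩ := K1 m2 hdeg
            have hsplit : m - m2 + m2 = m := tsub_add_cancel_of_le hle
            have hdsum : (m - m2).degree + m2.degree = m.degree := by
              rw [← aux_deg_add, hsplit]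
            have hmul : monomial m (1:K) = monomial (m - m2) 1 * monomial m2 1 := by
              rw [monomial_mul, one_mul, hsplit]
            have hπ2 : π (monomial m2 (1:K)) = π (b * ℓ) := Ideal.Quotient.eq.2 hbJ
            have hrw : π (monomial m (1:K)) =
                (Polynomial.X : Polynomial K) • π (monomial (m - m2) (1:K) * b) := by
              rw [Algebra.smul_def, RingHom.algebraMap_toAlgebra, hφX, hmul, map_mul, hπ2,
                map_mul, map_mul]
              ring
            rw [hrw]
            apply Submodule.smul_mem
            apply ih (N - 1) (by omega)
            have h1 : (monomial (m - m2) (1:K)).totalDegree = (m - m2).degree :=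
              totalDegree_monomial _ one_ne_zero
            have h2 : b.totalDegree ≤ e := hbhom.totalDegree_le
            have h3 : (monomial (m - m2) (1:K) * b).totalDegree ≤
                (monomial (m - m2) (1:K)).totalDegree + b.totalDegree :=
              totalDegree_mul _ _
            omega
        have hCmul : monomial m (coeff m f) = C (coeff m f) * monomial m (1:K) := by
          rw [C_mul_monomial, mul_one]
        rw [hCmul, map_mul, ← hφC]
        have hsm : φ (Polynomial.C (coeff m f)) * π (monomial m (1:K)) =
            (Polynomial.C (coeff m f)) • π (monomial m (1:K)) := by
          rw [Algebra.smul_def, RingHom.algebraMap_toAlgebra]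
        rw [hsm]
        exact Submodule.smul_mem _ _ hmono
    haveI hfinmod : Module.Finite (Polynomial K) (Rn K n ⧸ J) := by
      refine ⟨⟨T, le_antisymm le_top ?_⟩⟩
      rintro a -
      obtain ⟨f, rfl⟩ := Ideal.Quotient.mk_surjective a
      exact main f.totalDegree f le_rfl
    have hint : φ.IsIntegral := RingHom.Finite.to_isIntegral hfinmod
    exact aux_dim (Rn K n ⧸ J) φ hint

end
end
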